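/- arXiv:2308.16655 — 9 statements merged into one kernel-verified Lean document; each statement's English description precedes it below -/
import Mathlib

section
/- If W is a totally isotropic subspace of a scalar product space (V, g) with basis (N₁, ..., N_k), then there exists a totally isotropic subspace U of V with W ∩ U = {0} and a basis (M₁, ..., M_k) of U such that g(Nᵢ, Mⱼ) = δᵢⱼ holds for all 1 ≤ i, j ≤ k. -/
/- Common definitions: scalar product space (V, g) with nondegenerate symmetric bilinear
form g, algebraic curvature tensors, Jacobi operators, and derived notions. -/

variable {V : Type*} [AddCommGroup V] [Module ℝ V]

/-- `R` is quadrilinear and satisfies the symmetries of an algebraic curvature tensor. -/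
def IsCurv (R : V → V → V → V → ℝ) : Prop :=
  (∀ (a : ℝ) (X X' Y Z W : V), R (a • X + X') Y Z W = a * R X Y Z W + R X' Y Z W) ∧
  (∀ (a : ℝ) (X Y Y' Z W : V), R X (a • Y + Y') Z W = a * R X Y Z W + R X Y' Z W) ∧
  (∀ (a : ℝ) (X Y Z Z' W : V), R X Y (a • Z + Z') W = a * R X Y Z W + R X Y Z' W) ∧
  (∀ (a : ℝ) (X Y Z W W' : V), R X Y Z (a • W + W') = a * R X Y Z W + R X Y Z W') ∧
  (∀ X Y Z W : V, R X Y Z W = - R Y X Z W) ∧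
  (∀ X Y Z W : V, R X Y Z W = - R X Y W Z) ∧
  (∀ X Y Z W : V, R X Y Z W = R Z W X Y) ∧
  (∀ X Y Z W : V, R X Y Z W + R Y Z X W + R Z X Y W = 0)

/-- `J X` is the Jacobi operator of `R`: the unique linear map with
`g (J X Y) Z = R Y X X Z` for all `Y Z`. -/
def IsJacobi (g : V →ₗ[ℝ] V →ₗ[ℝ] ℝ) (R : V → V → V → V → ℝ) (J : V → V →ₗ[ℝ] V) : Prop :=
  ∀ X Y Z : V, g (J X Y) Z = R Y X X Z

/-- Jacobi-orthogonality: `g (J_X Y) (J_Y X) = 0` for all mutually orthogonal unit `X Y`. -/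
def JacobiOrthogonal (g : V →ₗ[ℝ] V →ₗ[ℝ] ℝ) (J : V → V →ₗ[ℝ] V) : Prop :=
  ∀ X Y : V, (g X X = 1 ∨ g X X = -1) → (g Y Y = 1 ∨ g Y Y = -1) → g X Y = 0 →
    g (J X Y) (J Y X) = 0

/-- a totally isotropic subspace W with basis (N₁,...,N_k) admits a totally
isotropic supplement U, disjoint from W, with a basis (M₁,...,M_k) with g(Nᵢ, Mⱼ) = δᵢⱼ. -/
theorem stmt_1 {V : Type*} [AddCommGroup V] [Module ℝ V] [FiniteDimensional ℝ V]
(g : V →ₗ[ℝ] V →ₗ[ℝ] ℝ) (hgsymm : ∀ x y : V, g x y = g y x)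
    (hgnd : ∀ x : V, (∀ y : V, g x y = 0) → x = 0)
    (W : Submodule ℝ V) (hWiso : ∀ x ∈ W, g x x = 0)
    {k : ℕ} (N : Fin k → V) (hNmem : ∀ i, N i ∈ W)
    (hNli : LinearIndependent ℝ N) (hNspan : Submodule.span ℝ (Set.range N) = W) :
    ∃ (U : Submodule ℝ V) (M : Fin k → V),
      (∀ x ∈ U, g x x = 0) ∧ W ⊓ U = ⊥ ∧ (∀ i, M i ∈ U) ∧
      LinearIndependent ℝ M ∧ Submodule.span ℝ (Set.range M) = U ∧
      (∀ i j : Fin k, g (N i) (M j) = if i = j then 1 else 0) := by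
  classical
  -- g vanishes on W × W
  have hW2 : ∀ x ∈ W, ∀ y ∈ W, g x y = 0 := by
    intro x hx y hy
    have h := hWiso (x + y) (W.add_mem hx hy)
    have hx' := hWiso x hx
    have hy' := hWiso y hy
    have hsym := hgsymm x y
    simp only [map_add, LinearMap.add_apply] at h
    linarith
  have hgNN : ∀ i j, g (N i) (N j) = 0 := fun i j => hW2 _ (hNmem i) _ (hNmem j)
  -- surjectivity of x ↦ (g (N i) x)
  set Φ : V →ₗ[ℝ] (Fin k → ℝ) := LinearMap.pi (fun i => g (N i)) with hΦdef
  have hΦx : ∀ (x : V) (i : Fin k), Φ x i = g (N i) x := fun x i => rfl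
  have hΦsurj : Function.Surjective Φ := by
    by_contra hns
    rw [← LinearMap.range_eq_top] at hns
    obtain ⟨φ, φ0, hle⟩ := (LinearMap.range Φ).exists_le_ker_of_lt_top (lt_top_iff_ne_top.2 hns)
    set c : Fin k → ℝ := fun i => φ (Pi.single i (1 : ℝ)) with hc
    have hφ : ∀ w : Fin k → ℝ, φ w = ∑ i, w i * c i := by
      intro w
      have hw : w = ∑ i, w i • (Pi.single i (1 : ℝ) : Fin k → ℝ) := by
        ext j
        simp [Pi.single_apply, Finset.sum_ite_eq']
      conv_lhs => rw [hw]
      rw [map_sum]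
      simp [smul_eq_mul, hc]
    have hvan : ∀ x : V, g (∑ i, c i • N i) x = 0 := by
      intro x
      have h1 : φ (Φ x) = 0 := hle ⟨x, rfl⟩
      rw [hφ] at h1
      simp only [map_sum, LinearMap.sum_apply, map_smul, LinearMap.smul_apply, smul_eq_mul]
      calc (∑ i, c i * g (N i) x) = ∑ i, Φ x i * c i := by
            refine Finset.sum_congr rfl fun i _ => ?_
            rw [hΦx]; ring
        _ = 0 := h1
    have hz : (∑ i, c i • N i) = 0 := hgnd _ hvan
    have hc0 : ∀ i, c i = 0 := Fintype.linearIndependent_iff.1 hNli c hz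
    exact φ0 (LinearMap.ext fun w => by rw [hφ]; simp [hc0])
  -- choose P with g (N i) (P j) = δ i j
  have hP : ∃ P : Fin k → V, ∀ i j, g (N i) (P j) = if i = j then 1 else 0 := by
    choose P hPj using fun j => hΦsurj (Pi.single j 1)
    refine ⟨P, fun i j => ?_⟩
    have := congrFun (hPj j) i
    rw [hΦx] at this
    rw [this, Pi.single_apply]
  obtain ⟨P, hNP⟩ := hP
  have hPN : ∀ i j, g (P i) (N j) = if i = j then 1 else 0 := by
    intro i j; rw [hgsymm, hNP, if_congr (Iff.intro Eq.symm Eq.symm) rfl rfl]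
  -- define the dual family
  set M : Fin k → V := fun j => P j - ∑ l, ((1/2 : ℝ) * g (P l) (P j)) • N l with hMdef
  have hNM : ∀ i j, g (N i) (M j) = if i = j then 1 else 0 := by
    intro i j
    simp only [hMdef, map_sub, map_sum, map_smul, smul_eq_mul, hgNN, mul_zero,
      Finset.sum_const_zero, sub_zero, hNP]
  have hMM : ∀ i j, g (M i) (M j) = 0 := by
    intro i j
    simp only [hMdef, map_sub, map_sum, map_smul, LinearMap.sub_apply, LinearMap.sum_apply,
      LinearMap.smul_apply, smul_eq_mul, hPN, hNP, hgNN, mul_zero, Finset.sum_const_zero,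
      sub_zero, mul_ite, mul_one, ite_mul, zero_mul, Finset.sum_ite_eq, Finset.sum_ite_eq',
      Finset.mem_univ, if_true, Finset.sum_sub_distrib, mul_sub]
    rw [hgsymm (P j) (P i)]
    ring
  -- the subspace
  refine ⟨Submodule.span ℝ (Set.range M), M, ?_, ?_, ?_, ?_, rfl, hNM⟩
  · -- totally isotropic
    intro x hx
    obtain ⟨a, rfl⟩ := (Submodule.mem_span_range_iff_exists_fun ℝ).1 hx
    simp only [map_sum, map_smul, LinearMap.sum_apply, LinearMap.smul_apply, smul_eq_mul, hMM,
      mul_zero, Finset.sum_const_zero]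
  · -- W ⊓ U = ⊥
    rw [Submodule.eq_bot_iff]
    rintro x ⟨hxW, hxU⟩
    obtain ⟨a, rfl⟩ := (Submodule.mem_span_range_iff_exists_fun ℝ).1 hxU
    have ha : ∀ i, a i = 0 := by
      intro i
      have h0 : g (N i) (∑ j, a j • M j) = 0 := hW2 _ (hNmem i) _ hxW
      simp only [map_sum, map_smul, smul_eq_mul, hNM, mul_ite, mul_one, mul_zero,
        Finset.sum_ite_eq, Finset.sum_ite_eq', Finset.mem_univ, if_true] at h0
      exact h0
    simp [ha]
  · intro j
    exact Submodule.subset_span ⟨j, rfl⟩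
  · -- linear independence
    rw [Fintype.linearIndependent_iff]
    intro a ha i
    have h0 := congrArg (fun x => g (N i) x) ha
    simp only [map_sum, map_smul, smul_eq_mul, hNM, mul_ite, mul_one, mul_zero,
      Finset.sum_ite_eq, Finset.sum_ite_eq', Finset.mem_univ, if_true, map_zero] at h0
    exact h0
end

section
/- If an algebraic curvature tensor R on a scalar product space (V, g) is Jacobi-orthogonal, then for ALL X, Y ∈ V (not only unit ones) with g(X, Y) = 0 one has g(J_X Y, J_Y X) = 0. -/
/- Common definitions: scalar product space (V, g) with nondegenerate symmetric bilinear
form g, algebraic curvature tensors, Jacobi operators, and derived notions. -/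

variable {V : Type*} [AddCommGroup V] [Module ℝ V]

lemma cubic_c0 (c0 c1 c2 c3 : ℝ) {S : Set ℝ} (hS : S.Infinite)
    (h : ∀ t ∈ S, c0 + c1*t + c2*t^2 + c3*t^3 = 0) : c0 = 0 := by
  set p : Polynomial ℝ := Polynomial.C c0 + Polynomial.C c1 * Polynomial.X +
    Polynomial.C c2 * Polynomial.X^2 + Polynomial.C c3 * Polynomial.X^3 with hp
  have hroot : S ⊆ {t | p.IsRoot t} := by
    intro t ht
    simp only [Set.mem_setOf_eq, Polynomial.IsRoot, hp]
    simp only [Polynomial.eval_add, Polynomial.eval_mul, Polynomial.eval_C,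
      Polynomial.eval_X, Polynomial.eval_pow]
    linarith [h t ht]
  have hzero : p = 0 := p.eq_zero_of_infinite_isRoot (hS.mono hroot)
  have := congrArg (Polynomial.eval 0) hzero
  simpa [hp] using this

lemma quad_inf (a b c : ℝ) (hb : b ≠ 0) : {t : ℝ | a + b*t + c*t^2 ≠ 0}.Infinite := by
  set q : Polynomial ℝ := Polynomial.C a + Polynomial.C b * Polynomial.X +
    Polynomial.C c * Polynomial.X^2 with hq
  have hqne : q ≠ 0 := by
    intro h0
    have := congrArg (fun p => Polynomial.coeff p 1) h0
    simp [hq] at this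
    exact hb this
  have hfin : {t : ℝ | q.IsRoot t}.Finite := Polynomial.finite_setOf_isRoot hqne
  have heq : {t : ℝ | a + b*t + c*t^2 ≠ 0} = {t : ℝ | q.IsRoot t}ᶜ := by
    ext t
    simp [hq, Polynomial.IsRoot]
  rw [heq]
  exact hfin.infinite_compl


/-- if R is Jacobi-orthogonal then g(J_X Y, J_Y X) = 0 for ALL orthogonal
X, Y ∈ V. -/
theorem stmt_2 {V : Type*} [AddCommGroup V] [Module ℝ V] [FiniteDimensional ℝ V]
(g : V →ₗ[ℝ] V →ₗ[ℝ] ℝ) (hgsymm : ∀ x y : V, g x y = g y x)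
    (hgnd : ∀ x : V, (∀ y : V, g x y = 0) → x = 0)
    (R : V → V → V → V → ℝ) (hR : IsCurv R)
    (J : V → V →ₗ[ℝ] V) (hJ : IsJacobi g R J)
    (horth : JacobiOrthogonal g J) :
    ∀ X Y : V, g X Y = 0 → g (J X Y) (J Y X) = 0 := by
  obtain ⟨h1, h2, h3, h4, ha, hb, hc, hbi⟩ := hR
  -- zero lemmas
  have hR02 : ∀ X Z W : V, R X 0 Z W = 0 := by
    intro X Z W
    have h := h2 1 X 0 0 Z W
    simp at h
    linarith
  have hR03 : ∀ X Y W : V, R X Y 0 W = 0 := by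
    intro X Y W
    have h := h3 1 X Y 0 0 W
    simp at h
    linarith
  -- smul lemmas
  have s2 : ∀ (a : ℝ) (P X Z W : V), R P (a • X) Z W = a * R P X Z W := by
    intro a P X Z W
    have h := h2 a P X 0 Z W
    rw [add_zero] at h
    rw [h, hR02]
    ring
  have s3 : ∀ (a : ℝ) (P Q X W : V), R P Q (a • X) W = a * R P Q X W := by
    intro a P Q X W
    have h := h3 a P Q X 0 W
    rw [add_zero] at h
    rw [h, hR03]
    ring
  -- additivity on slots 2,3
  have a2 : ∀ (P X X' Z W : V), R P (X + X') Z W = R P X Z W + R P X' Z W := by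
    intro P X X' Z W
    have h := h2 1 P X X' Z W
    rw [one_smul] at h
    linarith
  have a3 : ∀ (P Q X X' W : V), R P Q (X + X') W = R P Q X W + R P Q X' W := by
    intro P Q X X' W
    have h := h3 1 P Q X X' W
    rw [one_smul] at h
    linarith
  have a4 : ∀ (P Q Z X X' : V), R P Q Z (X + X') = R P Q Z X + R P Q Z X' := by
    intro P Q Z X X'
    have h := h4 1 P Q Z X X'
    rw [one_smul] at h
    linarith
  have s4 : ∀ (a : ℝ) (P Q Z X : V), R P Q Z (a • X) = a * R P Q Z X := by
    intro a P Q Z X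
    have h0 : R P Q Z (0 : V) = 0 := by
      have h := h4 1 P Q Z 0 0
      simp at h
      linarith
    have h := h4 a P Q Z X 0
    rw [add_zero] at h
    rw [h, h0]
    ring
  -- J of 0 and J X X = 0
  have hJ0 : ∀ Y : V, J 0 Y = 0 := by
    intro Y
    apply hgnd
    intro Z
    rw [hJ, hR02]
  have hJXX : ∀ X : V, J X X = 0 := by
    intro X
    apply hgnd
    intro Z
    rw [hJ]
    have := ha X X X Z
    linarith
  -- J (a • X) = a ^ 2 • J X (pointwise)
  have hJsmul : ∀ (a : ℝ) (X Y : V), J (a • X) Y = a ^ 2 • J X Y := by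
    intro a X Y
    have key : ∀ Z : V, g (J (a • X) Y - a ^ 2 • J X Y) Z = 0 := by
      intro Z
      have e1 : g (J (a • X) Y) Z = a ^ 2 * g (J X Y) Z := by
        rw [hJ, hJ, s2, s3]
        ring
      simp [map_sub, map_smul, smul_eq_mul]
      linarith
    have := hgnd _ key
    rw [sub_eq_zero] at this
    exact this
  -- expansion lemma
  have hexp : ∀ X W Y : V, ∃ c1 c2 c3 : ℝ, ∀ t : ℝ,
      g (J (X + t • W) Y) (J Y (X + t • W)) =
        g (J X Y) (J Y X) + c1 * t + c2 * t ^ 2 + c3 * t ^ 3 := by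
    intro X W Y
    set A := J Y X with hA
    set B := J Y W with hB
    refine ⟨R Y W X A + R Y X W A + R Y X X B,
            R Y W W A + R Y W X B + R Y X W B,
            R Y W W B, ?_⟩
    intro t
    have hZ : J Y (X + t • W) = A + t • B := by
      rw [map_add, map_smul]
    rw [hZ, hJ]
    have e2 : ∀ Z W' : V, R Y (X + t • W) Z W' = R Y X Z W' + t * R Y W Z W' := by
      intro Z W'
      rw [a2, s2]
    have e3 : ∀ P Q W' : V, R P Q (X + t • W) W' = R P Q X W' + t * R P Q W W' := by
      intro P Q W'
      rw [a3, s3]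
    have e4 : ∀ P Q Z : V, R P Q Z (A + t • B) = R P Q Z A + t * R P Q Z B := by
      intro P Q Z
      rw [a4, s4]
    rw [e2, e3, e3, e4, e4, e4, e4, hJ X Y A]
    ring
  -- scaling step: nonnull-nonnull case
  have step2 : ∀ X Y : V, g X X ≠ 0 → g Y Y ≠ 0 → g X Y = 0 →
      g (J X Y) (J Y X) = 0 := by
    intro X Y hX hY hXY
    set a := (Real.sqrt |g X X|)⁻¹ with hadef
    set b := (Real.sqrt |g Y Y|)⁻¹ with hbdef
    have hane : a ≠ 0 := by
      apply inv_ne_zero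
      rw [Real.sqrt_ne_zero']
      exact abs_pos.mpr hX
    have hbne : b ≠ 0 := by
      apply inv_ne_zero
      rw [Real.sqrt_ne_zero']
      exact abs_pos.mpr hY
    have hsq : ∀ r : ℝ, r ≠ 0 → ((Real.sqrt |r|)⁻¹) ^ 2 * r = 1 ∨
        ((Real.sqrt |r|)⁻¹) ^ 2 * r = -1 := by
      intro r hr
      have h1 : ((Real.sqrt |r|)⁻¹) ^ 2 = |r|⁻¹ := by
        rw [inv_pow, Real.sq_sqrt (abs_nonneg r)]
      rw [h1]
      rcases lt_or_gt_of_ne hr with h | h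
      · right
        rw [abs_of_neg h]
        field_simp
      · left
        rw [abs_of_pos h]
        field_simp
    have hXa : g (a • X) (a • X) = 1 ∨ g (a • X) (a • X) = -1 := by
      have : g (a • X) (a • X) = a ^ 2 * g X X := by
        simp [map_smul, smul_eq_mul]
        ring
      rw [this]
      exact hsq _ hX
    have hYb : g (b • Y) (b • Y) = 1 ∨ g (b • Y) (b • Y) = -1 := by
      have : g (b • Y) (b • Y) = b ^ 2 * g Y Y := by
        simp [map_smul, smul_eq_mul]
        ring
      rw [this]
      exact hsq _ hY
    have horth' : g (a • X) (b • Y) = 0 := by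
      simp [map_smul, smul_eq_mul, hXY]
    have h0 := horth (a • X) (b • Y) hXa hYb horth'
    have hcomp : g (J (a • X) (b • Y)) (J (b • Y) (a • X)) =
        a ^ 3 * b ^ 3 * g (J X Y) (J Y X) := by
      rw [hJsmul, hJsmul, map_smul, map_smul]
      simp [map_smul, smul_eq_mul]
      ring
    rw [hcomp] at h0
    have hne : a ^ 3 * b ^ 3 ≠ 0 := by positivity
    exact (mul_eq_zero.mp h0).resolve_left hne
  -- proportionality lemma
  have hprop : ∀ X Y : V, X ≠ 0 → (∀ W : V, g X W = 0 → g Y W = 0) →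
      ∃ c : ℝ, Y = c • X := by
    intro X Y hX h
    have : ∃ u : V, g X u ≠ 0 := by
      by_contra hcon
      push_neg at hcon
      exact hX (hgnd X hcon)
    obtain ⟨u, hu⟩ := this
    refine ⟨g Y u / g X u, ?_⟩
    have key : ∀ Z : V, g (Y - (g Y u / g X u) • X) Z = 0 := by
      intro Z
      have hW : g X (Z - (g X Z / g X u) • u) = 0 := by
        simp only [map_sub, map_smul, smul_eq_mul]
        field_simp
        ring
      have hYW := h _ hW
      simp only [map_sub, map_smul, smul_eq_mul, LinearMap.sub_apply, LinearMap.smul_apply] at hYW ⊢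
      field_simp at hYW ⊢
      linarith [hYW]
    have := hgnd _ key
    rw [sub_eq_zero] at this
    exact this
  -- step 3 : Y nonnull
  have step3 : ∀ X Y : V, g Y Y ≠ 0 → g X Y = 0 → g (J X Y) (J Y X) = 0 := by
    intro X Y hY hXY
    by_cases hcase : ∀ W : V, g Y W = 0 → g X W = 0
    · have hYne : Y ≠ 0 := by
        intro h0
        rw [h0] at hY
        simp at hY
      obtain ⟨c, hc⟩ := hprop Y X hYne hcase
      have hc0 : c = 0 := by
        have h0 : g X Y = c * g Y Y := by
          rw [hc]
          simp [map_smul, smul_eq_mul]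
        rw [hXY] at h0
        rcases mul_eq_zero.mp h0.symm with h | h
        · exact h
        · exact absurd h hY
      have hX0 : X = 0 := by rw [hc, hc0, zero_smul]
      rw [hX0, hJ0]
      simp
    · push_neg at hcase
      obtain ⟨W, hYW, hXW⟩ := hcase
      obtain ⟨c1, c2, c3, hpoly⟩ := hexp X W Y
      have hS : {t : ℝ | g X X + 2 * g X W * t + g W W * t ^ 2 ≠ 0}.Infinite :=
        quad_inf (g X X) (2 * g X W) (g W W) (by
          intro h0
          apply hXW
          linarith)
      apply cubic_c0 _ c1 c2 c3 hS
      intro t ht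
      simp only [Set.mem_setOf_eq] at ht
      have hnn : g (X + t • W) (X + t • W) ≠ 0 := by
        have heq : g (X + t • W) (X + t • W) =
            g X X + 2 * g X W * t + g W W * t ^ 2 := by
          simp only [map_add, map_smul, LinearMap.add_apply, LinearMap.smul_apply,
            smul_eq_mul]
          rw [hgsymm W X]
          ring
        rw [heq]
        exact ht
      have horth2 : g (X + t • W) Y = 0 := by
        simp only [map_add, map_smul, LinearMap.add_apply, LinearMap.smul_apply,
          smul_eq_mul]
        rw [hXY, hgsymm W Y, hYW]
        ring
      have h0 := step2 (X + t • W) Y hnn hY horth2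
      rw [hpoly t] at h0
      linarith
  -- final
  intro X Y hXY
  by_cases hY : g Y Y ≠ 0
  · exact step3 X Y hY hXY
  · push_neg at hY
    by_cases hX0 : X = 0
    · rw [hX0, hJ0]
      simp
    by_cases hcase : ∀ W : V, g X W = 0 → g Y W = 0
    · obtain ⟨c, hc⟩ := hprop X Y hX0 hcase
      rw [hc, map_smul, hJXX]
      simp
    · push_neg at hcase
      obtain ⟨W, hXW, hYW⟩ := hcase
      obtain ⟨c1, c2, c3, hpoly⟩ := hexp Y W X
      have hS : {t : ℝ | g Y Y + 2 * g Y W * t + g W W * t ^ 2 ≠ 0}.Infinite :=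
        quad_inf (g Y Y) (2 * g Y W) (g W W) (by
          intro h0
          apply hYW
          linarith)
      have hsymF : g (J X Y) (J Y X) = g (J Y X) (J X Y) := hgsymm _ _
      rw [hsymF]
      apply cubic_c0 _ c1 c2 c3 hS
      intro t ht
      simp only [Set.mem_setOf_eq] at ht
      have hnn : g (Y + t • W) (Y + t • W) ≠ 0 := by
        have heq : g (Y + t • W) (Y + t • W) =
            g Y Y + 2 * g Y W * t + g W W * t ^ 2 := by
          simp only [map_add, map_smul, LinearMap.add_apply, LinearMap.smul_apply,
            smul_eq_mul]
          rw [hgsymm W Y]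
          ring
        rw [heq]
        exact ht
      have horth2 : g X (Y + t • W) = 0 := by
        simp only [map_add, map_smul, smul_eq_mul]
        rw [hXY, hXW]
        ring
      have h0 := step3 X (Y + t • W) hnn horth2
      have h0' : g (J (Y + t • W) X) (J X (Y + t • W)) = 0 := by
        rw [hgsymm]
        exact h0
      rw [hpoly t] at h0'
      linarith
end

section
/- If an algebraic curvature tensor R on a scalar product space (V, g) is Jacobi-orthogonal, then for every μ ∈ ℝ the algebraic curvature tensor R + μR¹ is Jacobi-orthogonal. -/
/- Common definitions: scalar product space (V, g) with nondegenerate symmetric bilinear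
form g, algebraic curvature tensors, Jacobi operators, and derived notions. -/

variable {V : Type*} [AddCommGroup V] [Module ℝ V]

/-- The algebraic curvature tensor `R¹` of constant sectional curvature one. -/
def R1 (g : V →ₗ[ℝ] V →ₗ[ℝ] ℝ) : V → V → V → V → ℝ :=
  fun X Y Z W => g Y Z * g X W - g X Z * g Y W

/-- if R is Jacobi-orthogonal then so is R + μR¹ for every μ ∈ ℝ. -/
theorem stmt_3 {V : Type*} [AddCommGroup V] [Module ℝ V] [FiniteDimensional ℝ V]
(g : V →ₗ[ℝ] V →ₗ[ℝ] ℝ) (hgsymm : ∀ x y : V, g x y = g y x)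
    (hgnd : ∀ x : V, (∀ y : V, g x y = 0) → x = 0)
    (R : V → V → V → V → ℝ) (hR : IsCurv R)
    (J : V → V →ₗ[ℝ] V) (hJ : IsJacobi g R J)
    (horth : JacobiOrthogonal g J) (μ : ℝ)
    (J' : V → V →ₗ[ℝ] V)
    (hJ' : IsJacobi g (fun X Y Z W => R X Y Z W + μ * R1 g X Y Z W) J') :
    JacobiOrthogonal g J' := by
  intro X Y hX hY hXY
  have hYX : g Y X = 0 := by rw [hgsymm]; exact hXY
  have skew := hR.2.2.2.2.2.1
  -- R A B B B = 0
  have hRzero : ∀ A B : V, R A B B B = 0 := by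
    intro A B
    have := skew A B B B
    linarith
  have key : ∀ A B : V, g A B = 0 → J' A B = J A B + (μ * g A A) • B := by
    intro A B hAB
    have hBA : g B A = 0 := by rw [hgsymm]; exact hAB
    have hall : ∀ Z : V, g (J' A B - (J A B + (μ * g A A) • B)) Z = 0 := by
      intro Z
      have h1 := hJ' A B Z
      have h2 := hJ A B Z
      simp only [R1, hBA] at h1
      simp only [map_sub, map_add, map_smul, LinearMap.sub_apply, LinearMap.add_apply,
        LinearMap.smul_apply, smul_eq_mul]
      rw [h1, h2]
      ring
    exact sub_eq_zero.mp (hgnd _ hall)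
  rw [key X Y hXY, key Y X hYX]
  have hJXYX : g (J X Y) X = 0 := by rw [hJ X Y X]; exact hRzero Y X
  have hJYXY : g (J Y X) Y = 0 := by rw [hJ Y X Y]; exact hRzero X Y
  have hYJYX : g Y (J Y X) = 0 := by rw [hgsymm]; exact hJYXY
  have h0 := horth X Y hX hY hXY
  simp only [map_add, map_smul, LinearMap.add_apply, LinearMap.smul_apply, smul_eq_mul]
  rw [h0, hJXYX, hYJYX, hYX]
  ring
end

section
/- Every quasi-Clifford algebraic curvature tensor on a scalar product space (V, g) is Jacobi-orthogonal. -/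
/- Common definitions: scalar product space (V, g) with nondegenerate symmetric bilinear
form g, algebraic curvature tensors, Jacobi operators, and derived notions. -/

variable {V : Type*} [AddCommGroup V] [Module ℝ V]

/-- The algebraic curvature tensor `R^J` associated with a skew-adjoint endomorphism `J`. -/
def RJ (g : V →ₗ[ℝ] V →ₗ[ℝ] ℝ) (J : V →ₗ[ℝ] V) : V → V → V → V → ℝ :=
  fun X Y Z W => g (J X) Z * g (J Y) W - g (J Y) Z * g (J X) W + 2 * g (J X) Y * g (J Z) W

/-- A quasi-Clifford family: skew-adjoint endomorphisms satisfying the Hurwitz-like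
relations `JᵢJⱼ + JⱼJᵢ = 2δᵢⱼcᵢ·id`. -/
def IsQuasiCliffordFamily (g : V →ₗ[ℝ] V →ₗ[ℝ] ℝ) {m : ℕ}
    (F : Fin m → V →ₗ[ℝ] V) (c : Fin m → ℝ) : Prop :=
  (∀ (i : Fin m) (X Y : V), g (F i X) Y = - g X (F i Y)) ∧
  (∀ i j : Fin m, F i ∘ₗ F j + F j ∘ₗ F i = (2 * (if i = j then c i else 0)) • LinearMap.id)

lemma sum_antisymm_aux {m : ℕ} (a : Fin m → ℝ) (d : Fin m → Fin m → ℝ)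
    (h : ∀ i j, d j i + d i j = 0) :
    (∑ i : Fin m, ∑ j : Fin m, a i * a j * d j i) = 0 := by
  have h2 : (∑ i : Fin m, ∑ j : Fin m, (a i * a j * d j i + a j * a i * d i j)) = 0 :=
    Finset.sum_eq_zero fun i _ => Finset.sum_eq_zero fun j _ => by
      have hd : d i j = - d j i := by linarith [h i j]
      rw [hd]; ring
  have h3 : (∑ i : Fin m, ∑ j : Fin m, (a i * a j * d j i + a j * a i * d i j))
      = (∑ i : Fin m, ∑ j : Fin m, a i * a j * d j i)
        + ∑ i : Fin m, ∑ j : Fin m, a j * a i * d i j := by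
    simp [Finset.sum_add_distrib]
  have h4 : (∑ i : Fin m, ∑ j : Fin m, a j * a i * d i j)
      = ∑ i : Fin m, ∑ j : Fin m, a i * a j * d j i :=
    Finset.sum_comm
  linarith

/-- every quasi-Clifford algebraic curvature tensor is Jacobi-orthogonal. -/
theorem stmt_4 {V : Type*} [AddCommGroup V] [Module ℝ V] [FiniteDimensional ℝ V]
(g : V →ₗ[ℝ] V →ₗ[ℝ] ℝ) (hgsymm : ∀ x y : V, g x y = g y x)
    (hgnd : ∀ x : V, (∀ y : V, g x y = 0) → x = 0)
    {m : ℕ} (F : Fin m → V →ₗ[ℝ] V) (c : Fin m → ℝ)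
    (hF : IsQuasiCliffordFamily g F c)
    (μ₀ : ℝ) (μ : Fin m → ℝ) (R : V → V → V → V → ℝ)
    (hR : ∀ X Y Z W : V,
      R X Y Z W = μ₀ * R1 g X Y Z W + ∑ i : Fin m, μ i * RJ g (F i) X Y Z W)
    (J : V → V →ₗ[ℝ] V) (hJ : IsJacobi g R J) :
    JacobiOrthogonal g J := by
  obtain ⟨hskew, hhur⟩ := hF
  intro X Y hX hY hXY
  have hYX : g Y X = 0 := (hgsymm Y X).trans hXY
  have hFZZ : ∀ (i : Fin m) (Z : V), g (F i Z) Z = 0 := by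
    intro i Z
    have h1 := hskew i Z Z
    have h2 := hgsymm Z (F i Z)
    linarith
  have hXFX : ∀ i : Fin m, g X (F i X) = 0 := fun i => (hgsymm X (F i X)).trans (hFZZ i X)
  have hb : ∀ j : Fin m, g (F j X) Y = - g (F j Y) X := by
    intro j
    rw [hskew j X Y, hgsymm]
  have hanti : ∀ i j : Fin m, g (F j Y) (F i X) + g (F i Y) (F j X) = 0 := by
    intro i j
    have h3 := congrArg (fun f : V →ₗ[ℝ] V => g Y (f X)) (hhur j i)
    simp only [LinearMap.add_apply, LinearMap.coe_comp, Function.comp_apply,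
      LinearMap.smul_apply, LinearMap.id_apply, map_add, map_smul, smul_eq_mul, hYX,
      mul_zero] at h3
    rw [hskew j Y (F i X), hskew i Y (F j X)]
    linarith
  have hJYX : ∀ W : V, g W (J Y X) = R X Y Y W :=
    fun W => (hgsymm W (J Y X)).trans (hJ Y X W)
  have e1 : g Y (J Y X) = 0 := by
    rw [hJYX, hR]
    simp [R1, RJ, hXY, hYX, hFZZ]
  have e2 : ∀ i : Fin m, g (F i X) (J Y X)
      = ∑ j : Fin m, μ j * (3 * (g (F j X) Y * g (F j Y) (F i X))) := by
    intro i
    rw [hJYX, hR]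
    rw [show R1 g X Y Y (F i X) = 0 from by simp [R1, hXY, hXFX i]]
    rw [mul_zero, zero_add]
    apply Finset.sum_congr rfl
    intro j _
    simp only [RJ]
    rw [hFZZ j Y]
    ring
  have key : (∑ i : Fin m, ∑ j : Fin m,
      (μ i * g (F i Y) X) * (μ j * g (F j Y) X) * g (F j Y) (F i X)) = 0 :=
    sum_antisymm_aux (fun i => μ i * g (F i Y) X) (fun i j => g (F i Y) (F j X))
      (fun i j => hanti i j)
  have step : ∀ i : Fin m, μ i * RJ g (F i) Y X X (J Y X)
      = ∑ j : Fin m, (-9) * ((μ i * g (F i Y) X) * (μ j * g (F j Y) X) * g (F j Y) (F i X)) := by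
    intro i
    simp only [RJ]
    rw [hFZZ i X, e2 i]
    rw [show ∀ s : ℝ, μ i * (g (F i Y) X * s - 0 * g (F i Y) (J Y X)
        + 2 * g (F i Y) X * s) = (3 * μ i * g (F i Y) X) * s from fun s => by ring]
    rw [Finset.mul_sum]
    apply Finset.sum_congr rfl
    intro j _
    rw [hb j]
    ring
  rw [hJ X Y (J Y X), hR]
  rw [show R1 g Y X X (J Y X) = 0 from by simp [R1, hYX, e1]]
  rw [mul_zero, zero_add]
  have tot : (∑ i : Fin m, μ i * RJ g (F i) Y X X (J Y X))
      = (-9) * ∑ i : Fin m, ∑ j : Fin m,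
        (μ i * g (F i Y) X) * (μ j * g (F j Y) X) * g (F j Y) (F i X) := by
    rw [Finset.mul_sum]
    apply Finset.sum_congr rfl
    intro i _
    rw [step i, Finset.mul_sum]
  rw [tot, key, mul_zero]
end

section
/- Let R be a Jacobi-diagonalizable Jacobi-orthogonal algebraic curvature tensor on a scalar product space (V, g). If X ∈ V is nonnull, λ ∈ ℝ, and Y lies in V_λ(X) = {Z ∈ V : g(Z, X) = 0 and J_X Z = ε_X λ Z}, then J_Y X lies in the subspace Span{X} + V_λ(X). -/
/- Common definitions: scalar product space (V, g) with nondegenerate symmetric bilinear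
form g, algebraic curvature tensors, Jacobi operators, and derived notions. -/

variable {V : Type*} [AddCommGroup V] [Module ℝ V]

/-- An endomorphism is diagonalizable iff its eigenspaces span. -/
def IsDiagonalizable (f : V →ₗ[ℝ] V) : Prop :=
  (⨆ μ : ℝ, Module.End.eigenspace f μ) = ⊤

/-- `R` (via its Jacobi operator `J`) is Jacobi-diagonalizable. -/
def JacobiDiagonalizable (g : V →ₗ[ℝ] V →ₗ[ℝ] ℝ) (J : V → V →ₗ[ℝ] V) : Prop :=
  ∀ X : V, g X X ≠ 0 → IsDiagonalizable (J X)

section Helpers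
variable {R : V → V → V → V → ℝ}

lemma r_zero2 (hR : IsCurv R) (X Z W : V) : R X 0 Z W = 0 := by
  have h := hR.2.1 1 X 0 0 Z W
  simp only [one_smul, add_zero, one_mul] at h
  linarith

lemma r_add2 (hR : IsCurv R) (X Y Y' Z W : V) : R X (Y + Y') Z W = R X Y Z W + R X Y' Z W := by
  have h := hR.2.1 1 X Y Y' Z W
  simpa using h

lemma r_smul2 (hR : IsCurv R) (a : ℝ) (X Y Z W : V) : R X (a • Y) Z W = a * R X Y Z W := by
  have h := hR.2.1 a X Y 0 Z W
  simpa [r_zero2 hR] using h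

lemma r_zero3 (hR : IsCurv R) (X Y W : V) : R X Y 0 W = 0 := by
  have h := hR.2.2.1 1 X Y 0 0 W
  simp only [one_smul, add_zero, one_mul] at h
  linarith

lemma r_add3 (hR : IsCurv R) (X Y Z Z' W : V) : R X Y (Z + Z') W = R X Y Z W + R X Y Z' W := by
  have h := hR.2.2.1 1 X Y Z Z' W
  simpa using h

lemma r_smul3 (hR : IsCurv R) (a : ℝ) (X Y Z W : V) : R X Y (a • Z) W = a * R X Y Z W := by
  have h := hR.2.2.1 a X Y Z 0 W
  simpa [r_zero3 hR] using h

lemma r_zero4 (hR : IsCurv R) (X Y Z : V) : R X Y Z 0 = 0 := by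
  have h := hR.2.2.2.1 1 X Y Z 0 0
  simp only [one_smul, add_zero, one_mul] at h
  linarith

lemma r_add4 (hR : IsCurv R) (X Y Z W W' : V) : R X Y Z (W + W') = R X Y Z W + R X Y Z W' := by
  have h := hR.2.2.2.1 1 X Y Z W W'
  simpa using h

lemma r_smul4 (hR : IsCurv R) (a : ℝ) (X Y Z W : V) : R X Y Z (a • W) = a * R X Y Z W := by
  have h := hR.2.2.2.1 a X Y Z W 0
  simpa [r_zero4 hR] using h

lemma r_last_eq (hR : IsCurv R) (X Y Z : V) : R X Y Z Z = 0 := by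
  have h := hR.2.2.2.2.2.1 X Y Z Z
  linarith

lemma r_first_eq (hR : IsCurv R) (X Z W : V) : R X X Z W = 0 := by
  have h := hR.2.2.2.2.1 X X Z W
  linarith

end Helpers

section G
variable {g : V →ₗ[ℝ] V →ₗ[ℝ] ℝ}

lemma eq_of_g (hgnd : ∀ x : V, (∀ y : V, g x y = 0) → x = 0)
    {u v : V} (h : ∀ z, g u z = g v z) : u = v := by
  have h0 : u - v = 0 := by
    apply hgnd
    intro y
    simp [map_sub, h y]
  exact sub_eq_zero.mp h0

end G

section JBasics
variable {g : V →ₗ[ℝ] V →ₗ[ℝ] ℝ} {R : V → V → V → V → ℝ} {J : V → V →ₗ[ℝ] V}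

lemma J_self_zero (hgnd : ∀ x : V, (∀ y : V, g x y = 0) → x = 0)
    (hR : IsCurv R) (hJ : IsJacobi g R J) (X : V) : J X X = 0 := by
  apply eq_of_g hgnd
  intro z
  rw [hJ, r_first_eq hR]
  simp

lemma J_smul_base (hgnd : ∀ x : V, (∀ y : V, g x y = 0) → x = 0)
    (hR : IsCurv R) (hJ : IsJacobi g R J) (a : ℝ) (X Y : V) :
    J (a • X) Y = (a * a) • J X Y := by
  apply eq_of_g hgnd
  intro z
  have h1 : g (J (a • X) Y) z = a * (a * R Y X X z) := by
    rw [hJ, r_smul2 hR, r_smul3 hR]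
  have h2 : g ((a * a) • J X Y) z = (a * a) * R Y X X z := by
    simp only [map_smul, LinearMap.smul_apply, smul_eq_mul]
    rw [hJ]
  rw [h1, h2]; ring

/-- Step 1: Jacobi orthogonality for all nonnull orthogonal pairs. -/
lemma orth_nonnull (hgnd : ∀ x : V, (∀ y : V, g x y = 0) → x = 0)
    (hR : IsCurv R) (hJ : IsJacobi g R J)
    (horth : JacobiOrthogonal g J) (X Y : V)
    (hX : g X X ≠ 0) (hY : g Y Y ≠ 0) (hXY : g X Y = 0) :
    g (J X Y) (J Y X) = 0 := by
  set a : ℝ := (Real.sqrt |g X X|)⁻¹ with ha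
  set b : ℝ := (Real.sqrt |g Y Y|)⁻¹ with hb
  have hXpos : (0:ℝ) < |g X X| := abs_pos.mpr hX
  have hYpos : (0:ℝ) < |g Y Y| := abs_pos.mpr hY
  have hsX : Real.sqrt |g X X| > 0 := Real.sqrt_pos.mpr hXpos
  have hsY : Real.sqrt |g Y Y| > 0 := Real.sqrt_pos.mpr hYpos
  have ha0 : a ≠ 0 := by positivity
  have hb0 : b ≠ 0 := by positivity
  have hmX := Real.mul_self_sqrt hXpos.le
  have hmY := Real.mul_self_sqrt hYpos.le
  have haa : a * a * |g X X| = 1 := by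
    rw [ha]; field_simp; rw [sq, hmX]
  have hbb : b * b * |g Y Y| = 1 := by
    rw [hb]; field_simp; rw [sq, hmY]
  have hu1 : g (a • X) (a • X) = 1 ∨ g (a • X) (a • X) = -1 := by
    have hq : g (a • X) (a • X) = a * a * g X X := by
      simp only [map_smul, LinearMap.smul_apply, smul_eq_mul]; ring
    rcases abs_cases (g X X) with ⟨h1, _⟩ | ⟨h1, _⟩
    · left; rw [hq]; rw [h1] at haa; linarith
    · right; rw [hq]; rw [h1] at haa; linarith
  have hu2 : g (b • Y) (b • Y) = 1 ∨ g (b • Y) (b • Y) = -1 := by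
    have hq : g (b • Y) (b • Y) = b * b * g Y Y := by
      simp only [map_smul, LinearMap.smul_apply, smul_eq_mul]; ring
    rcases abs_cases (g Y Y) with ⟨h1, _⟩ | ⟨h1, _⟩
    · left; rw [hq]; rw [h1] at hbb; linarith
    · right; rw [hq]; rw [h1] at hbb; linarith
  have hu3 : g (a • X) (b • Y) = 0 := by
    simp only [map_smul, LinearMap.smul_apply, smul_eq_mul]
    rw [hXY]; ring
  have h0 := horth (a • X) (b • Y) hu1 hu2 hu3
  have e : g (J (a • X) (b • Y)) (J (b • Y) (a • X))
      = ((a*a*a)*(b*b*b)) * g (J X Y) (J Y X) := by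
    rw [J_smul_base hgnd hR hJ, J_smul_base hgnd hR hJ]
    simp only [map_smul, LinearMap.smul_apply, smul_eq_mul]
    ring
  rw [e] at h0
  have hc : ((a*a*a)*(b*b*b)) ≠ 0 := by positivity
  exact (mul_eq_zero.mp h0).resolve_left hc

end JBasics

section Step2
variable {g : V →ₗ[ℝ] V →ₗ[ℝ] ℝ} {R : V → V → V → V → ℝ} {J : V → V →ₗ[ℝ] V}

/-- Step 2: Jacobi orthogonality for nonnull X and arbitrary Y ⊥ X. -/
lemma orth_all (hgsymm : ∀ x y : V, g x y = g y x)
    (hgnd : ∀ x : V, (∀ y : V, g x y = 0) → x = 0)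
    (hR : IsCurv R) (hJ : IsJacobi g R J)
    (horth : JacobiOrthogonal g J) (X Y : V)
    (hX : g X X ≠ 0) (hXY : g X Y = 0) :
    g (J X Y) (J Y X) = 0 := by
  by_cases hYY : g Y Y ≠ 0
  · exact orth_nonnull hgnd hR hJ horth X Y hX hYY hXY
  push_neg at hYY
  by_cases hW : ∀ W : V, g W X = 0 → g W W = 0
  · -- the restriction of g to X^⊥ is totally isotropic, hence Y = 0
    have hY0 : Y = 0 := by
      apply hgnd
      intro z
      have hc : g (z - (g z X / g X X) • X) X = 0 := by
        simp only [map_sub, map_smul, LinearMap.sub_apply, LinearMap.smul_apply, smul_eq_mul]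
        field_simp; ring
      set z' := z - (g z X / g X X) • X with hz'
      have hYX : g Y X = 0 := by rw [hgsymm]; exact hXY
      have hsum : g (Y + z') X = 0 := by
        simp only [map_add, LinearMap.add_apply]
        rw [hYX, hc]; ring
      have h1 : g (Y + z') (Y + z') = 0 := hW _ hsum
      have h2 : g z' z' = 0 := hW _ hc
      have h3 : g Y z' = 0 := by
        simp only [map_add, LinearMap.add_apply] at h1
        have := hgsymm z' Y
        rw [hYY, h2] at h1
        linarith [h1, this]
      have hz : z = (g z X / g X X) • X + z' := by rw [hz']; abel
      rw [hz]
      simp only [map_add, map_smul, LinearMap.add_apply, LinearMap.smul_apply, smul_eq_mul]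
      rw [hYX, h3]; ring
    rw [hY0]
    simp
  · push_neg at hW
    obtain ⟨W, hWX, hWW⟩ := hW
    -- expansion of the Jacobi-orthogonality cubic
    have expand : ∀ s : ℝ, g (J X (Y + s • W)) (J (Y + s • W) X)
        = R X Y Y (J X Y)
          + s * (R X Y Y (J X W) + R X Y W (J X Y) + R X W Y (J X Y))
          + s^2 * (R X Y W (J X W) + R X W Y (J X W) + R X W W (J X Y))
          + s^3 * (R X W W (J X W)) := by
      intro s
      rw [hgsymm, hJ]
      have h1 : J X (Y + s • W) = J X Y + s • J X W := by
        rw [map_add, map_smul]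
      rw [h1]
      simp only [r_add2 hR, r_smul2 hR, r_add3 hR, r_smul3 hR, r_add4 hR, r_smul4 hR]
      ring
    set c0 := R X Y Y (J X Y) with hc0
    set c1 := R X Y Y (J X W) + R X Y W (J X Y) + R X W Y (J X Y) with hc1
    set c2 := R X Y W (J X W) + R X W Y (J X W) + R X W W (J X Y) with hc2
    set c3 := R X W W (J X W) with hc3
    set p : Polynomial ℝ := Polynomial.C c3 * Polynomial.X ^ 3
      + Polynomial.C c2 * Polynomial.X ^ 2 + Polynomial.C c1 * Polynomial.X
      + Polynomial.C c0 with hp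
    have heval : ∀ s : ℝ, p.eval s = c0 + s * c1 + s^2 * c2 + s^3 * c3 := by
      intro s
      simp [hp]
      ring
    have hvan : ∀ s : ℝ, s ≠ 0 → 2 * g Y W + s * g W W ≠ 0 → p.eval s = 0 := by
      intro s hs1 hs2
      have hq : g (Y + s • W) (Y + s • W) = s * (2 * g Y W + s * g W W) := by
        simp only [map_add, map_smul, LinearMap.add_apply, LinearMap.smul_apply, smul_eq_mul]
        rw [hYY, hgsymm W Y]; ring
      have hnn : g (Y + s • W) (Y + s • W) ≠ 0 := by
        rw [hq]; exact mul_ne_zero hs1 hs2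
      have horthY : g X (Y + s • W) = 0 := by
        simp only [map_add, map_smul, LinearMap.add_apply, LinearMap.smul_apply, smul_eq_mul]
        rw [hXY, hgsymm X W, hWX]; ring
      have h0 := orth_nonnull hgnd hR hJ horth X (Y + s • W) hX hnn horthY
      rw [expand s] at h0
      rw [heval s]
      linarith
    have hpz : p = 0 := by
      apply Polynomial.eq_zero_of_infinite_isRoot
      apply Set.Infinite.mono (s := (({0, (-2 * g Y W) / g W W} : Set ℝ))ᶜ)
      · intro s hs
        simp only [Set.mem_compl_iff, Set.mem_insert_iff, Set.mem_singleton_iff, not_or] at hs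
        obtain ⟨hs1, hs2⟩ := hs
        have hs2' : 2 * g Y W + s * g W W ≠ 0 := by
          intro hcon
          apply hs2
          field_simp
          linarith
        exact hvan s hs1 hs2'
      · exact Set.Finite.infinite_compl (Set.toFinite _)
    have hc00 : c0 = 0 := by
      have := congrArg (Polynomial.eval 0) hpz
      simpa [hp] using this
    rw [hgsymm, hJ]
    exact hc00
end Step2

section Step3
variable {g : V →ₗ[ℝ] V →ₗ[ℝ] ℝ} {R : V → V → V → V → ℝ} {J : V → V →ₗ[ℝ] V}

/-- Step 3: key orthogonality: if Y, Z are eigenvectors of J_X orthogonal to X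
with distinct eigenvalues, then R X Y Y Z = 0. -/
lemma key_orth (hgsymm : ∀ x y : V, g x y = g y x)
    (hgnd : ∀ x : V, (∀ y : V, g x y = 0) → x = 0)
    (hR : IsCurv R) (hJ : IsJacobi g R J)
    (horth : JacobiOrthogonal g J) (X Y Z : V) (μ m : ℝ)
    (hX : g X X ≠ 0) (hne : m ≠ μ)
    (hYX : g Y X = 0) (hZX : g Z X = 0)
    (hYe : J X Y = μ • Y) (hZe : J X Z = m • Z) :
    R X Y Y Z = 0 := by
  have expand : ∀ σ : ℝ, g (J X (Y + σ • Z)) (J (Y + σ • Z) X)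
      = μ * R X Y Y Y + σ * μ * (R X Y Z Y + R X Z Y Y) + σ^2 * μ * R X Z Z Y
        + σ * m * R X Y Y Z + σ^2 * m * (R X Y Z Z + R X Z Y Z)
        + σ^3 * m * R X Z Z Z := by
    intro σ
    rw [hgsymm, hJ]
    have h1 : J X (Y + σ • Z) = μ • Y + (σ * m) • Z := by
      rw [map_add, map_smul, hYe, hZe, smul_smul]
    rw [h1]
    simp only [r_add2 hR, r_smul2 hR, r_add3 hR, r_smul3 hR, r_add4 hR, r_smul4 hR]
    ring
  have hgo : ∀ σ : ℝ, g X (Y + σ • Z) = 0 := by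
    intro σ
    simp only [map_add, map_smul, LinearMap.add_apply, LinearMap.smul_apply, smul_eq_mul]
    rw [hgsymm X Y, hgsymm X Z, hYX, hZX]; ring
  have e1 := orth_all hgsymm hgnd hR hJ horth X (Y + (1:ℝ) • Z) hX (hgo 1)
  have e2 := orth_all hgsymm hgnd hR hJ horth X (Y + (-1:ℝ) • Z) hX (hgo (-1))
  rw [expand 1] at e1
  rw [expand (-1)] at e2
  have s1 : R X Y Z Y = - R X Y Y Z := by
    have := hR.2.2.2.2.2.1 X Y Z Y
    linarith
  have s2 : R X Z Y Y = 0 := r_last_eq hR X Z Y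
  have s3 : R X Z Z Z = 0 := r_last_eq hR X Z Z
  have s4 : R X Y Z Z = 0 := r_last_eq hR X Y Z
  have h4 : (m - μ) * R X Y Y Z = 0 := by
    linear_combination (e1 - e2) / 2 - μ * s1 - μ * s2 - m * s3
  have hsub : m - μ ≠ 0 := sub_ne_zero.mpr hne
  exact (mul_eq_zero.mp h4).resolve_left hsub
end Step3

section Step4
variable {g : V →ₗ[ℝ] V →ₗ[ℝ] ℝ} {R : V → V → V → V → ℝ} {J : V → V →ₗ[ℝ] V}

lemma J_selfadj (hgsymm : ∀ x y : V, g x y = g y x)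
    (hR : IsCurv R) (hJ : IsJacobi g R J) (X u v : V) :
    g (J X u) v = g u (J X v) := by
  rw [hJ, hgsymm u (J X v), hJ]
  have p1 := hR.2.2.2.2.2.2.1 u X X v
  have p2 := hR.2.2.2.2.1 X v u X
  have p3 := hR.2.2.2.2.2.1 v X u X
  linarith

lemma r_XXX (hR : IsCurv R) (v X : V) : R v X X X = 0 := r_last_eq hR v X X

end Step4


/-- for Jacobi-diagonalizable Jacobi-orthogonal R, nonnull X, and
Y ∈ V_λ(X) = {Z : g(Z,X) = 0, J_X Z = ε_X λ Z}, one has J_Y X ∈ Span{X} + V_λ(X). -/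
theorem stmt_6 {V : Type*} [AddCommGroup V] [Module ℝ V] [FiniteDimensional ℝ V]
(g : V →ₗ[ℝ] V →ₗ[ℝ] ℝ) (hgsymm : ∀ x y : V, g x y = g y x)
    (hgnd : ∀ x : V, (∀ y : V, g x y = 0) → x = 0)
    (R : V → V → V → V → ℝ) (hR : IsCurv R)
    (J : V → V →ₗ[ℝ] V) (hJ : IsJacobi g R J)
    (hdiag : JacobiDiagonalizable g J) (horth : JacobiOrthogonal g J)
    (X : V) (hX : g X X ≠ 0) (l : ℝ) (Y : V)
    (hY : Y ∈ LinearMap.ker (g.flip X) ⊓ Module.End.eigenspace (J X) (g X X * l)) :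
    J Y X ∈ Submodule.span ℝ {X} ⊔
      (LinearMap.ker (g.flip X) ⊓ Module.End.eigenspace (J X) (g X X * l)) := by
  obtain ⟨hY1, hY2⟩ := Submodule.mem_inf.mp hY
  rw [LinearMap.mem_ker, LinearMap.flip_apply] at hY1
  rw [Module.End.mem_eigenspace_iff] at hY2
  set μl : ℝ := g X X * l with hμl
  set K : Submodule ℝ V := LinearMap.ker (g.flip X) with hK
  set S : Submodule ℝ V := Submodule.span ℝ {X} ⊔ (K ⊓ Module.End.eigenspace (J X) μl)
    with hS
  set T : Submodule ℝ V :=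
    ⨆ m : {m : ℝ // m ≠ μl}, (K ⊓ Module.End.eigenspace (J X) m.1) with hT
  have hmemK : ∀ v : V, v ∈ K ↔ g v X = 0 := by
    intro v; rw [hK, LinearMap.mem_ker, LinearMap.flip_apply]
  have hJXX : J X X = 0 := J_self_zero hgnd hR hJ X
  -- Step A : S ⊔ T = ⊤
  have hTop : S ⊔ T = ⊤ := by
    rw [eq_top_iff, ← hdiag X hX]
    apply iSup_le
    intro m
    intro v hv
    rw [Module.End.mem_eigenspace_iff] at hv
    set c : ℝ := g v X / g X X with hc
    set v' : V := v - c • X with hv'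
    have hv'K : v' ∈ K := by
      rw [hmemK, hv']
      simp only [map_sub, map_smul, LinearMap.sub_apply, LinearMap.smul_apply, smul_eq_mul]
      rw [hc]; field_simp; ring
    have hmc : m * (g v X) = 0 := by
      have h1 : g (J X v) X = R v X X X := hJ X v X
      rw [r_XXX hR, hv] at h1
      simpa using h1.symm
    have hv'E : J X v' = m • v' := by
      have hmv : m • v = m • v' := by
        rw [hv', smul_sub]
        rcases mul_eq_zero.mp hmc with h | h
        · rw [h]; simp
        · have hc0 : c = 0 := by rw [hc, h]; simp
          rw [hc0]; simp
      rw [hv', map_sub, map_smul, hJXX, hv, smul_zero, sub_zero, hmv]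
    have hvmem : v = c • X + v' := by rw [hv']; abel
    rw [hvmem]
    apply Submodule.add_mem
    · apply Submodule.mem_sup_left
      rw [hS]
      apply Submodule.mem_sup_left
      exact Submodule.smul_mem _ _ (Submodule.mem_span_singleton_self X)
    · by_cases hm : m = μl
      · apply Submodule.mem_sup_left
        rw [hS]
        apply Submodule.mem_sup_right
        exact Submodule.mem_inf.mpr ⟨hv'K, by
          rw [Module.End.mem_eigenspace_iff, ← hm]; exact hv'E⟩
      · apply Submodule.mem_sup_right
        rw [hT]
        refine Submodule.mem_iSup_of_mem ⟨m, hm⟩ ?_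
        exact Submodule.mem_inf.mpr ⟨hv'K, by
          rw [Module.End.mem_eigenspace_iff]; exact hv'E⟩
  -- U ⊥ T
  have hUT : ∀ t ∈ T, g (J Y X) t = 0 := by
    have hle : T ≤ LinearMap.ker (g (J Y X)) := by
      rw [hT]
      apply iSup_le
      rintro ⟨m, hm⟩ z hz
      obtain ⟨hzK, hzE⟩ := Submodule.mem_inf.mp hz
      rw [hmemK] at hzK
      rw [Module.End.mem_eigenspace_iff] at hzE
      rw [LinearMap.mem_ker]
      have h1 : g (J Y X) z = R X Y Y z := hJ Y X z
      rw [h1]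
      exact key_orth hgsymm hgnd hR hJ horth X Y z μl m hX hm hY1 hzK hY2 hzE
    intro t ht
    exact hle ht
  -- S ⊥ T
  have hTK : T ≤ K := by
    rw [hT]; apply iSup_le; rintro ⟨m, hm⟩; exact inf_le_left
  have hST : ∀ s ∈ S, ∀ t ∈ T, g s t = 0 := by
    have hXT : ∀ t ∈ T, g X t = 0 := by
      intro t ht
      rw [hgsymm]
      exact (hmemK t).mp (hTK ht)
    have hET : ∀ y, y ∈ K ⊓ Module.End.eigenspace (J X) μl → ∀ t ∈ T, g y t = 0 := by
      intro y hy
      obtain ⟨hyK, hyE⟩ := Submodule.mem_inf.mp hy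
      rw [Module.End.mem_eigenspace_iff] at hyE
      have hle : T ≤ LinearMap.ker (g y) := by
        rw [hT]
        apply iSup_le
        rintro ⟨m, hm⟩ z hz
        obtain ⟨hzK, hzE⟩ := Submodule.mem_inf.mp hz
        rw [Module.End.mem_eigenspace_iff] at hzE
        rw [LinearMap.mem_ker]
        have h1 : g (J X y) z = g y (J X z) := J_selfadj hgsymm hR hJ X y z
        rw [hyE, hzE] at h1
        simp only [map_smul, LinearMap.smul_apply, smul_eq_mul] at h1
        have h2 : (μl - m) * g y z = 0 := by linarith
        have h3 : μl - m ≠ 0 := sub_ne_zero.mpr (Ne.symm hm)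
        exact (mul_eq_zero.mp h2).resolve_left h3
      intro t ht
      exact hle ht
    intro s hs t ht
    rw [hS] at hs
    rcases Submodule.mem_sup.mp hs with ⟨s1, hs1, s2, hs2, rfl⟩
    rcases Submodule.mem_span_singleton.mp hs1 with ⟨a, rfl⟩
    simp only [map_add, map_smul, LinearMap.add_apply, LinearMap.smul_apply, smul_eq_mul]
    rw [hXT t ht, hET s2 hs2 t ht]; ring
  -- conclusion
  have hU : J Y X ∈ S ⊔ T := by rw [hTop]; exact Submodule.mem_top
  rcases Submodule.mem_sup.mp hU with ⟨s, hs, t, ht, hst⟩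
  have ht0 : t = 0 := by
    apply hgnd
    intro z
    have hz : z ∈ S ⊔ T := by rw [hTop]; exact Submodule.mem_top
    rcases Submodule.mem_sup.mp hz with ⟨s', hs', t', ht', rfl⟩
    have h1 : g t s' = 0 := by rw [hgsymm]; exact hST s' hs' t ht
    have h2 : g t t' = 0 := by
      have hts : t = J Y X - s := by rw [← hst]; abel
      rw [hts]
      simp only [map_sub, LinearMap.sub_apply]
      rw [hUT t' ht', hST s hs t' ht']; ring
    simp only [map_add, LinearMap.add_apply]
    rw [h1, h2]; ring
  rw [← hst, ht0, add_zero]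
  exact hs
end

section
/- Let R be a Jacobi-diagonalizable Jacobi-orthogonal algebraic curvature tensor on a scalar product space (V, g) such that for every nonnull X ∈ V the Jacobi operator J_X has no null eigenvectors (i.e., every eigenvector W of J_X satisfies g(W, W) ≠ 0). Then R is Jacobi-dual. -/
/- Common definitions: scalar product space (V, g) with nondegenerate symmetric bilinear
form g, algebraic curvature tensors, Jacobi operators, and derived notions. -/

variable {V : Type*} [AddCommGroup V] [Module ℝ V]

/-- Jacobi-duality. -/
def JacobiDual (g : V →ₗ[ℝ] V →ₗ[ℝ] ℝ) (J : V → V →ₗ[ℝ] V) : Prop :=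
  ∀ (X Y : V) (l : ℝ), g X X ≠ 0 → J X Y = (g X X * l) • Y → J Y X = (g Y Y * l) • X
section Stmt8Aux

/-- zero in the first slot -/
private lemma Rzero1 (R : V → V → V → V → ℝ) (hR : IsCurv R) :
    ∀ Y Z W : V, R 0 Y Z W = 0 := by
  intro Y Z W
  have h := hR.1 1 0 0 Y Z W
  simp only [one_smul, add_zero, one_mul] at h
  linarith

private lemma Rzero2 (R : V → V → V → V → ℝ) (hR : IsCurv R) :
    ∀ X Z W : V, R X 0 Z W = 0 := by
  intro X Z W
  have h := hR.2.1 1 X 0 0 Z W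
  simp only [one_smul, add_zero, one_mul] at h
  linarith

private lemma Rzero3 (R : V → V → V → V → ℝ) (hR : IsCurv R) :
    ∀ X Y W : V, R X Y 0 W = 0 := by
  intro X Y W
  have h := hR.2.2.1 1 X Y 0 0 W
  simp only [one_smul, add_zero, one_mul] at h
  linarith

private lemma Radd1 (R : V → V → V → V → ℝ) (hR : IsCurv R) :
    ∀ X X' Y Z W : V, R (X + X') Y Z W = R X Y Z W + R X' Y Z W := by
  intro X X' Y Z W
  have h := hR.1 1 X X' Y Z W
  simpa using h

private lemma Rsmul1 (R : V → V → V → V → ℝ) (hR : IsCurv R) :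
    ∀ (a : ℝ) (X Y Z W : V), R (a • X) Y Z W = a * R X Y Z W := by
  intro a X Y Z W
  have h := hR.1 a X 0 Y Z W
  simpa [Rzero1 R hR] using h

private lemma Radd2 (R : V → V → V → V → ℝ) (hR : IsCurv R) :
    ∀ X Y Y' Z W : V, R X (Y + Y') Z W = R X Y Z W + R X Y' Z W := by
  intro X Y Y' Z W
  have h := hR.2.1 1 X Y Y' Z W
  simpa using h

private lemma Rsmul2 (R : V → V → V → V → ℝ) (hR : IsCurv R) :
    ∀ (a : ℝ) (X Y Z W : V), R X (a • Y) Z W = a * R X Y Z W := by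
  intro a X Y Z W
  have h := hR.2.1 a X Y 0 Z W
  simpa [Rzero2 R hR] using h

private lemma Radd3 (R : V → V → V → V → ℝ) (hR : IsCurv R) :
    ∀ X Y Z Z' W : V, R X Y (Z + Z') W = R X Y Z W + R X Y Z' W := by
  intro X Y Z Z' W
  have h := hR.2.2.1 1 X Y Z Z' W
  simpa using h

private lemma Rsmul3 (R : V → V → V → V → ℝ) (hR : IsCurv R) :
    ∀ (a : ℝ) (X Y Z W : V), R X Y (a • Z) W = a * R X Y Z W := by
  intro a X Y Z W
  have h := hR.2.2.1 a X Y Z 0 W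
  simpa [Rzero3 R hR] using h

/-- antisymmetry in the first two slots kills equal arguments -/
private lemma R12 (R : V → V → V → V → ℝ) (hR : IsCurv R) :
    ∀ A Z W : V, R A A Z W = 0 := by
  intro A Z W
  have h := hR.2.2.2.2.1 A A Z W
  linarith

/-- antisymmetry in the last two slots kills equal arguments -/
private lemma R34 (R : V → V → V → V → ℝ) (hR : IsCurv R) :
    ∀ A B C : V, R A B C C = 0 := by
  intro A B C
  have h := hR.2.2.2.2.2.1 A B C C
  linarith

/-- Extension of Jacobi-orthogonality to all pairs of orthogonal nonnull vectors. -/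
private lemma orthNN (g : V →ₗ[ℝ] V →ₗ[ℝ] ℝ) (R : V → V → V → V → ℝ)
    (hgsymm : ∀ x y : V, g x y = g y x) (hR : IsCurv R)
    (J : V → V →ₗ[ℝ] V) (hJ : IsJacobi g R J) (horth : JacobiOrthogonal g J) :
    ∀ A B : V, g A A ≠ 0 → g B B ≠ 0 → g A B = 0 → g (J A B) (J B A) = 0 := by
  intro A B hA hB hAB
  have haA : (0:ℝ) < |g A A| := abs_pos.mpr hA
  have haB : (0:ℝ) < |g B B| := abs_pos.mpr hB
  set c : ℝ := (Real.sqrt |g A A|)⁻¹ with hc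
  set d : ℝ := (Real.sqrt |g B B|)⁻¹ with hd
  have hsA : (0:ℝ) < Real.sqrt |g A A| := Real.sqrt_pos.mpr haA
  have hsB : (0:ℝ) < Real.sqrt |g B B| := Real.sqrt_pos.mpr haB
  have hcpos : 0 < c := inv_pos.mpr hsA
  have hdpos : 0 < d := inv_pos.mpr hsB
  have hc2 : c * c = |g A A|⁻¹ := by
    rw [hc, ← mul_inv, Real.mul_self_sqrt (abs_nonneg _)]
  have hd2 : d * d = |g B B|⁻¹ := by
    rw [hd, ← mul_inv, Real.mul_self_sqrt (abs_nonneg _)]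
  have hvalA : g (c • A) (c • A) = c * c * g A A := by
    simp only [map_smul, LinearMap.smul_apply, smul_eq_mul]; ring
  have hvalB : g (d • B) (d • B) = d * d * g B B := by
    simp only [map_smul, LinearMap.smul_apply, smul_eq_mul]; ring
  have hunitA : g (c • A) (c • A) = 1 ∨ g (c • A) (c • A) = -1 := by
    rcases hA.lt_or_gt with hneg | hpos
    · right; rw [hvalA, hc2, abs_of_neg hneg]; field_simp
    · left; rw [hvalA, hc2, abs_of_pos hpos]; field_simp
  have hunitB : g (d • B) (d • B) = 1 ∨ g (d • B) (d • B) = -1 := by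
    rcases hB.lt_or_gt with hneg | hpos
    · right; rw [hvalB, hd2, abs_of_neg hneg]; field_simp
    · left; rw [hvalB, hd2, abs_of_pos hpos]; field_simp
  have horthAB : g (c • A) (d • B) = 0 := by
    simp only [map_smul, LinearMap.smul_apply, smul_eq_mul, hAB, mul_zero]
  have h0 := horth (c • A) (d • B) hunitA hunitB horthAB
  have e1 : g (J (c • A) (d • B)) (J (d • B) (c • A))
      = (c * c * c) * (d * d * d) * (g (J A B) (J B A)) := by
    rw [hJ (c • A) (d • B) (J (d • B) (c • A))]
    rw [Rsmul1 R hR, Rsmul2 R hR, Rsmul3 R hR]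
    rw [← hJ A B (J (d • B) (c • A))]
    rw [hgsymm (J A B) (J (d • B) (c • A))]
    rw [hJ (d • B) (c • A) (J A B)]
    rw [Rsmul1 R hR, Rsmul2 R hR, Rsmul3 R hR]
    rw [← hJ B A (J A B)]
    rw [hgsymm (J B A) (J A B)]
    ring
  rw [e1] at h0
  have hne : (c * c * c) * (d * d * d) ≠ 0 :=
    (mul_pos (mul_pos (mul_pos hcpos hcpos) hcpos)
      (mul_pos (mul_pos hdpos hdpos) hdpos)).ne'
  exact (mul_eq_zero.mp h0).resolve_left hne

set_option maxHeartbeats 1600000 in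
/-- The key case: `X` nonnull and `Y ⊥ X`. -/
private lemma keyStep (g : V →ₗ[ℝ] V →ₗ[ℝ] ℝ)
    (hgsymm : ∀ x y : V, g x y = g y x)
    (hgnd : ∀ x : V, (∀ y : V, g x y = 0) → x = 0)
    (R : V → V → V → V → ℝ) (hR : IsCurv R)
    (J : V → V →ₗ[ℝ] V) (hJ : IsJacobi g R J)
    (horth : JacobiOrthogonal g J)
    (hnonullEig : ∀ X : V, g X X ≠ 0 →
      ∀ (W : V) (μ : ℝ), W ≠ 0 → J X W = μ • W → g W W ≠ 0)
    (X Y : V) (l : ℝ) (hX : g X X ≠ 0) (hXY : g X Y = 0)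
    (heig : J X Y = (g X X * l) • Y) :
    J Y X = (g Y Y * l) • X := by
  by_cases hY0 : Y = 0
  · subst hY0
    have hJ0 : J (0 : V) X = 0 := by
      apply hgnd
      intro T
      rw [hJ]
      exact Rzero2 R hR X 0 T
    rw [hJ0]
    simp
  have hεY : g Y Y ≠ 0 := hnonullEig X hX Y (g X X * l) hY0 heig
  have hgYX : g Y X = 0 := (hgsymm Y X).trans hXY
  have hJXX : J X X = 0 := by
    apply hgnd
    intro T
    rw [hJ]
    exact R12 R hR X X T
  have hUY : g (J Y X) Y = 0 := by
    rw [hJ]; exact R34 R hR X Y Y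
  have hYU : g Y (J Y X) = 0 := (hgsymm Y (J Y X)).trans hUY
  have hUX : g (J Y X) X = g X X * g Y Y * l := by
    rw [hJ Y X X, hR.2.2.2.2.2.2.1 X Y Y X, ← hJ X Y Y, heig]
    simp only [map_smul, LinearMap.smul_apply, smul_eq_mul]
    ring
  -- component lemmas
  have cXYY : ∀ T : V, R X Y Y T = g (J Y X) T := fun T => (hJ Y X T).symm
  have cYXX : ∀ T : V, R Y X X T = g X X * l * g Y T := by
    intro T
    rw [← hJ X Y T, heig]
    simp only [map_smul, LinearMap.smul_apply, smul_eq_mul]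
  have cXYX : ∀ T : V, R X Y X T = -(g X X * l * g Y T) := by
    intro T
    have hb := hR.2.2.2.2.2.2.2 X Y X T
    have hz : R X X Y T = 0 := R12 R hR X Y T
    have hy := cYXX T
    linarith
  have cYXY : ∀ T : V, R Y X Y T = -(g (J Y X) T) := by
    intro T
    have hb := hR.2.2.2.2.2.2.2 Y X Y T
    have hz : R Y Y X T = 0 := R12 R hR Y X T
    have hy := cXYY T
    linarith
  have hswap : ∀ P Q : V, R P X X Q = R Q X X P := by
    intro P Q
    have h1 := hR.2.2.2.2.2.2.1 P X X Q
    have h2 := hR.2.2.2.2.1 X Q P X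
    have h3 := hR.2.2.2.2.2.1 Q X P X
    linarith
  -- the Jacobi operator of combinations of X and Y, applied to such combinations
  have hJAB : ∀ (a b cc dd : ℝ) (T : V),
      g (J (a • X + b • Y) (cc • X + dd • Y)) T
        = g X X * l * (a * a * dd - a * b * cc) * g Y T
          + (b * b * cc - a * b * dd) * g (J Y X) T := by
    intro a b cc dd T
    rw [hJ]
    simp only [Radd1 R hR, Rsmul1 R hR, Radd2 R hR, Rsmul2 R hR, Radd3 R hR, Rsmul3 R hR]
    simp only [R12 R hR]
    simp only [cXYY, cYXX, cXYX, cYXY]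
    ring
  -- Step C : compute g (J Y X) (J Y X)
  have hUU : g (J Y X) (J Y X) = g X X * g Y Y * g Y Y * l * l := by
    by_cases hσ : g X X + g Y Y = 0
    · -- mixed case : use the pair (2X + Y, X + 2Y)
      have hAA : g ((2:ℝ) • X + (1:ℝ) • Y) ((2:ℝ) • X + (1:ℝ) • Y) ≠ 0 := by
        have hval : g ((2:ℝ) • X + (1:ℝ) • Y) ((2:ℝ) • X + (1:ℝ) • Y)
            = 4 * g X X + g Y Y := by
          simp only [map_add, map_smul, LinearMap.add_apply, LinearMap.smul_apply,
            smul_eq_mul, hXY, hgYX]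
          ring
        rw [hval]
        intro h
        apply hX
        linarith
      have hBB : g ((1:ℝ) • X + (2:ℝ) • Y) ((1:ℝ) • X + (2:ℝ) • Y) ≠ 0 := by
        have hval : g ((1:ℝ) • X + (2:ℝ) • Y) ((1:ℝ) • X + (2:ℝ) • Y)
            = g X X + 4 * g Y Y := by
          simp only [map_add, map_smul, LinearMap.add_apply, LinearMap.smul_apply,
            smul_eq_mul, hXY, hgYX]
          ring
        rw [hval]
        intro h
        apply hεY
        linarith
      have hAB : g ((2:ℝ) • X + (1:ℝ) • Y) ((1:ℝ) • X + (2:ℝ) • Y) = 0 := by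
        simp only [map_add, map_smul, LinearMap.add_apply, LinearMap.smul_apply,
          smul_eq_mul, hXY, hgYX]
        linear_combination 2 * hσ
      have h0 := orthNN g R hgsymm hR J hJ horth _ _ hAA hBB hAB
      rw [hJAB 2 1 1 2 (J ((1:ℝ) • X + (2:ℝ) • Y) ((2:ℝ) • X + (1:ℝ) • Y))] at h0
      rw [hgsymm Y (J ((1:ℝ) • X + (2:ℝ) • Y) ((2:ℝ) • X + (1:ℝ) • Y))] at h0
      rw [hgsymm (J Y X) (J ((1:ℝ) • X + (2:ℝ) • Y) ((2:ℝ) • X + (1:ℝ) • Y))] at h0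
      rw [hJAB 1 2 2 1 Y, hJAB 1 2 2 1 (J Y X)] at h0
      rw [hUY, hYU] at h0
      linear_combination (-1/18 : ℝ) * h0
        - (g X X * g Y Y * l * l) * hσ
    · -- generic case : use the pair (X + Y, (g Y Y) X − (g X X) Y)
      have hAA : g ((1:ℝ) • X + (1:ℝ) • Y) ((1:ℝ) • X + (1:ℝ) • Y) ≠ 0 := by
        have hval : g ((1:ℝ) • X + (1:ℝ) • Y) ((1:ℝ) • X + (1:ℝ) • Y)
            = g X X + g Y Y := by
          simp only [map_add, map_smul, LinearMap.add_apply, LinearMap.smul_apply,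
            smul_eq_mul, hXY, hgYX]
          ring
        rw [hval]; exact hσ
      have hBB : g ((g Y Y) • X + (-(g X X)) • Y) ((g Y Y) • X + (-(g X X)) • Y) ≠ 0 := by
        have hval : g ((g Y Y) • X + (-(g X X)) • Y) ((g Y Y) • X + (-(g X X)) • Y)
            = g X X * g Y Y * (g X X + g Y Y) := by
          simp only [map_add, map_smul, LinearMap.add_apply, LinearMap.smul_apply,
            smul_eq_mul, hXY, hgYX]
          ring
        rw [hval]
        exact mul_ne_zero (mul_ne_zero hX hεY) hσ
      have hAB : g ((1:ℝ) • X + (1:ℝ) • Y) ((g Y Y) • X + (-(g X X)) • Y) = 0 := by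
        simp only [map_add, map_smul, LinearMap.add_apply, LinearMap.smul_apply,
          smul_eq_mul, hXY, hgYX]
        ring
      have h0 := orthNN g R hgsymm hR J hJ horth _ _ hAA hBB hAB
      rw [hJAB 1 1 (g Y Y) (-(g X X))
        (J ((g Y Y) • X + (-(g X X)) • Y) ((1:ℝ) • X + (1:ℝ) • Y))] at h0
      rw [hgsymm Y (J ((g Y Y) • X + (-(g X X)) • Y) ((1:ℝ) • X + (1:ℝ) • Y))] at h0
      rw [hgsymm (J Y X) (J ((g Y Y) • X + (-(g X X)) • Y) ((1:ℝ) • X + (1:ℝ) • Y))] at h0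
      rw [hJAB (g Y Y) (-(g X X)) 1 1 Y, hJAB (g Y Y) (-(g X X)) 1 1 (J Y X)] at h0
      rw [hUY, hYU] at h0
      -- h0 factors as G (G+E)^2 (q - G E^2 l^2) = 0
      have hfac : g X X * (g X X + g Y Y) ^ 2
          * (g (J Y X) (J Y X) - g X X * g Y Y * g Y Y * l * l) = 0 := by
        linear_combination h0
      have hne : g X X * (g X X + g Y Y) ^ 2 ≠ 0 := mul_ne_zero hX (pow_ne_zero 2 hσ)
      have h2 := (mul_eq_zero.mp hfac).resolve_left hne
      linarith [h2]
  -- Step D : derivative identity from Jacobi-orthogonality of the pairs (X, Y + sV)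
  have hdagger : ∀ Vv : V, g X Vv = 0 →
      g (J Y X) (J X Vv) = g X X * l * g (J Y X) Vv := by
    intro Vv hXV
    have hgXB : ∀ s : ℝ, g X (Y + s • Vv) = 0 := by
      intro s
      simp [map_add, map_smul, hXY, hXV]
    have hBform : ∀ s : ℝ, g (Y + s • Vv) (Y + s • Vv)
        = g Y Y + s * (2 * g Y Vv) + s ^ 2 * (g Vv Vv) := by
      intro s
      simp only [map_add, map_smul, LinearMap.add_apply, LinearMap.smul_apply, smul_eq_mul]
      rw [hgsymm Vv Y]
      ring
    have hexpand : ∀ s : ℝ, g (J X (Y + s • Vv)) (J (Y + s • Vv) X)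
        = (g (J Y X) (J X Vv) - g X X * l * g (J Y X) Vv) * s
          + (g X X * l * (R X Vv Vv Y) + R X Y Vv (J X Vv) + R X Vv Y (J X Vv)) * s ^ 2
          + (R X Vv Vv (J X Vv)) * s ^ 3 := by
      intro s
      have hJx : J X (Y + s • Vv) = (g X X * l) • Y + s • (J X Vv) := by
        rw [map_add, map_smul, heig]
      rw [hJx]
      simp only [map_add, map_smul, LinearMap.add_apply, LinearMap.smul_apply, smul_eq_mul]
      rw [hgsymm Y (J (Y + s • Vv) X), hgsymm (J X Vv) (J (Y + s • Vv) X)]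
      rw [hJ (Y + s • Vv) X Y, hJ (Y + s • Vv) X (J X Vv)]
      simp only [Radd2 R hR, Rsmul2 R hR, Radd3 R hR, Rsmul3 R hR]
      rw [hR.2.2.2.2.2.1 X Y Vv Y]
      simp only [R34 R hR, cXYY, hUY]
      ring
    have hvanish : ∀ s : ℝ, g (Y + s • Vv) (Y + s • Vv) ≠ 0 →
        (g (J Y X) (J X Vv) - g X X * l * g (J Y X) Vv) * s
          + (g X X * l * (R X Vv Vv Y) + R X Y Vv (J X Vv) + R X Vv Y (J X Vv)) * s ^ 2
          + (R X Vv Vv (J X Vv)) * s ^ 3 = 0 := by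
      intro s hs
      rw [← hexpand s]
      exact orthNN g R hgsymm hR J hJ horth X (Y + s • Vv) hX hs (hgXB s)
    set K1 := g (J Y X) (J X Vv) - g X X * l * g (J Y X) Vv with hK1d
    set K2 := g X X * l * (R X Vv Vv Y) + R X Y Vv (J X Vv) + R X Vv Y (J X Vv) with hK2d
    set K3 := R X Vv Vv (J X Vv) with hK3d
    set M := 2 * |g Y Vv| + |g Vv Vv| + 1 with hMd
    have hM1 : 1 ≤ M := by
      rw [hMd]
      have h1 := abs_nonneg (g Y Vv)
      have h2 := abs_nonneg (g Vv Vv)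
      linarith
    have hMpos : 0 < M := by linarith
    have hEY : 0 < |g Y Y| := abs_pos.mpr hεY
    have h2M : (0:ℝ) < 2 * M := by linarith
    set δ := min 1 (|g Y Y| / (2 * M)) with hδd
    have hδpos : 0 < δ := by
      rw [hδd]
      exact lt_min one_pos (div_pos hEY h2M)
    have hδ1 : δ ≤ 1 := by rw [hδd]; exact min_le_left _ _
    have hδ2' : δ ≤ |g Y Y| / (2 * M) := by rw [hδd]; exact min_le_right _ _
    have hδ2 : δ * (2 * M) ≤ |g Y Y| := (le_div_iff₀ h2M).mp hδ2'
    have hgood : ∀ s : ℝ, |s| ≤ δ → g (Y + s • Vv) (Y + s • Vv) ≠ 0 := by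
      intro s hsle h0
      rw [hBform s] at h0
      have hs1 : |s| ≤ 1 := le_trans hsle hδ1
      have hsn : 0 ≤ |s| := abs_nonneg s
      have habs : |g Y Y| ≤ |s| * (2 * |g Y Vv|) + |s| * |g Vv Vv| := by
        have e0 : g Y Y = -(s * (2 * g Y Vv) + s ^ 2 * (g Vv Vv)) := by linarith
        have e1 : |g Y Y| ≤ |s * (2 * g Y Vv)| + |s ^ 2 * (g Vv Vv)| := by
          rw [e0, abs_neg]
          exact abs_add_le _ _
        have e2 : |s * (2 * g Y Vv)| = |s| * (2 * |g Y Vv|) := by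
          rw [abs_mul, abs_mul, abs_two]
        have e3 : |s ^ 2 * (g Vv Vv)| ≤ |s| * |g Vv Vv| := by
          rw [abs_mul, abs_pow, sq]
          have h7 : 0 ≤ |s| * |g Vv Vv| := mul_nonneg hsn (abs_nonneg _)
          nlinarith [mul_le_mul_of_nonneg_right hs1 h7]
        linarith
      have hfin : |g Y Y| ≤ δ * (M - 1) := by
        have h4 : |s| * (2 * |g Y Vv|) + |s| * |g Vv Vv| = |s| * (M - 1) := by
          rw [hMd]; ring
        rw [h4] at habs
        have h5 : |s| * (M - 1) ≤ δ * (M - 1) :=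
          mul_le_mul_of_nonneg_right hsle (by linarith)
        linarith
      nlinarith
    have hδabs : |δ| ≤ δ := le_of_eq (abs_of_pos hδpos)
    have E1 := hvanish δ (hgood δ hδabs)
    have E2 := hvanish (-δ) (hgood (-δ) (by rw [abs_neg]; exact hδabs))
    have E3 := hvanish (δ/2) (hgood (δ/2)
      (by rw [abs_of_pos (by linarith : (0:ℝ) < δ/2)]; linarith))
    have E4 := hvanish (-(δ/2)) (hgood (-(δ/2))
      (by rw [abs_neg, abs_of_pos (by linarith : (0:ℝ) < δ/2)]; linarith))
    have o1 : K1 * δ + K3 * δ ^ 3 = 0 := by linear_combination E1 / 2 - E2 / 2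
    have o2 : K1 * (δ/2) + K3 * (δ/2) ^ 3 = 0 := by linear_combination E3 / 2 - E4 / 2
    have hK3 : K3 = 0 := by
      have h5 : K3 * δ ^ 3 = 0 := by linear_combination (4/3 : ℝ) * o1 - (8/3 : ℝ) * o2
      exact (mul_eq_zero.mp h5).resolve_right (pow_ne_zero 3 (ne_of_gt hδpos))
    have hK1 : K1 = 0 := by
      have h6 : K1 * δ = 0 := by linear_combination o1 - δ ^ 3 * hK3
      exact (mul_eq_zero.mp h6).resolve_right (ne_of_gt hδpos)
    rw [hK1d] at hK1
    linarith
  -- Assemble : W := J Y X − (g Y Y l) X is an eigenvector of J X with null norm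
  set W := J Y X + (-(g Y Y * l)) • X with hWdef
  have hfinal : ∀ T : V, g (J X W) T = g X X * l * g W T := by
    intro T
    have hcperp : g X (T + (-(g X T / g X X)) • X) = 0 := by
      simp only [map_add, map_smul, smul_eq_mul]
      field_simp
      ring
    have hd := hdagger _ hcperp
    have hJT : J X (T + (-(g X T / g X X)) • X) = J X T := by
      rw [map_add, map_smul, hJXX, smul_zero, add_zero]
    rw [hJT] at hd
    rw [hJ X W T, hWdef]
    rw [Radd1 R hR, Rsmul1 R hR, R12 R hR X X T]
    rw [hswap (J Y X) T]
    rw [← hJ X T (J Y X)]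
    rw [hgsymm (J X T) (J Y X)]
    rw [hd]
    simp only [map_add, map_smul, LinearMap.add_apply, LinearMap.smul_apply, smul_eq_mul,
      hUX]
    field_simp
    ring
  have hJXW : J X W = (g X X * l) • W := by
    rw [← sub_eq_zero]
    apply hgnd
    intro T
    simp only [map_sub, LinearMap.sub_apply, map_smul, LinearMap.smul_apply, smul_eq_mul]
    rw [hfinal T]
    ring
  have hWW : g W W = 0 := by
    rw [hWdef]
    simp only [map_add, map_smul, LinearMap.add_apply, LinearMap.smul_apply, smul_eq_mul]
    rw [hUU, hUX, hgsymm X (J Y X), hUX]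
    ring
  by_cases hW0 : W = 0
  · have h3 : J Y X + (-(g Y Y * l)) • X = 0 := by rw [← hWdef]; exact hW0
    rw [neg_smul, add_neg_eq_zero] at h3
    exact h3
  · exact absurd hWW (hnonullEig X hX W (g X X * l) hW0 hJXW)

end Stmt8Aux

/-- a Jacobi-diagonalizable Jacobi-orthogonal R such that J_X has no null
eigenvectors for all nonnull X is Jacobi-dual. -/
theorem stmt_8 {V : Type*} [AddCommGroup V] [Module ℝ V] [FiniteDimensional ℝ V]
(g : V →ₗ[ℝ] V →ₗ[ℝ] ℝ) (hgsymm : ∀ x y : V, g x y = g y x)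
    (hgnd : ∀ x : V, (∀ y : V, g x y = 0) → x = 0)
    (R : V → V → V → V → ℝ) (hR : IsCurv R)
    (J : V → V →ₗ[ℝ] V) (hJ : IsJacobi g R J)
    (hdiag : JacobiDiagonalizable g J) (horth : JacobiOrthogonal g J)
    (hnonullEig : ∀ X : V, g X X ≠ 0 →
      ∀ (W : V) (μ : ℝ), W ≠ 0 → J X W = μ • W → g W W ≠ 0) :
    JacobiDual g J := by
  intro X Y₀ l hX heig
  have hJXX : J X X = 0 := by
    apply hgnd
    intro T
    rw [hJ]
    exact R12 R hR X X T
  have h1 : g (J X Y₀) X = 0 := by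
    rw [hJ]
    exact R34 R hR Y₀ X X
  have h2 : g (J X Y₀) X = g X X * (l * g X Y₀) := by
    rw [heig]
    simp only [map_smul, LinearMap.smul_apply, smul_eq_mul]
    rw [hgsymm Y₀ X]
    ring
  have hlY : l * g X Y₀ = 0 := by
    have h3 : g X X * (l * g X Y₀) = 0 := by rw [← h2]; exact h1
    exact (mul_eq_zero.mp h3).resolve_left hX
  -- the orthogonal rescaled vector Ŷ := (g X X) Y₀ − (g X Y₀) X
  have hXY : g X ((g X X) • Y₀ + (-(g X Y₀)) • X) = 0 := by
    simp only [map_add, map_smul, smul_eq_mul]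
    ring
  have heigY : J X ((g X X) • Y₀ + (-(g X Y₀)) • X)
      = (g X X * l) • ((g X X) • Y₀ + (-(g X Y₀)) • X) := by
    rw [map_add, map_smul, map_smul, heig, hJXX, smul_zero, add_zero]
    rw [smul_add, smul_smul, smul_smul, smul_smul]
    have hz : g X X * l * (-(g X Y₀)) = 0 := by
      linear_combination (-(g X X)) * hlY
    rw [hz, zero_smul, add_zero]
    congr 1
    ring
  have happ := keyStep g hgsymm hgnd R hR J hJ horth hnonullEig X _ l hX hXY heigY
  -- relate J Ŷ X with J Y₀ X
  have hB1 : ∀ T : V, R X Y₀ X T = -(g X X * (l * g Y₀ T)) := by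
    intro T
    have hb := hR.2.2.2.2.2.2.2 X Y₀ X T
    have hz1 : R X X Y₀ T = 0 := R12 R hR X Y₀ T
    have hy : R Y₀ X X T = g X X * (l * g Y₀ T) := by
      rw [← hJ X Y₀ T, heig]
      simp only [map_smul, LinearMap.smul_apply, smul_eq_mul]
      ring
    linarith
  have hJsc : J ((g X X) • Y₀ + (-(g X Y₀)) • X) X = (g X X * g X X) • (J Y₀ X) := by
    rw [← sub_eq_zero]
    apply hgnd
    intro T
    simp only [map_sub, LinearMap.sub_apply, map_smul, LinearMap.smul_apply, smul_eq_mul]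
    rw [hJ, hJ]
    simp only [Radd2 R hR, Rsmul2 R hR, Radd3 R hR, Rsmul3 R hR, R12 R hR]
    rw [hB1 T]
    linear_combination (g X X * g X X * g Y₀ T) * hlY
  have hYYl : g ((g X X) • Y₀ + (-(g X Y₀)) • X) ((g X X) • Y₀ + (-(g X Y₀)) • X) * l
      = g X X * g X X * (g Y₀ Y₀ * l) := by
    simp only [map_add, map_smul, LinearMap.add_apply, LinearMap.smul_apply, smul_eq_mul]
    rw [hgsymm Y₀ X]
    linear_combination (-(g X X) * g X Y₀) * hlY
  have hfin : (g X X * g X X) • (J Y₀ X) = (g X X * g X X) • ((g Y₀ Y₀ * l) • X) := by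
    calc (g X X * g X X) • (J Y₀ X)
        = J ((g X X) • Y₀ + (-(g X Y₀)) • X) X := hJsc.symm
      _ = (g ((g X X) • Y₀ + (-(g X Y₀)) • X) ((g X X) • Y₀ + (-(g X Y₀)) • X) * l) • X :=
          happ
      _ = (g X X * g X X * (g Y₀ Y₀ * l)) • X := by rw [hYYl]
      _ = (g X X * g X X) • ((g Y₀ Y₀ * l) • X) := by rw [smul_smul]
  have hcne : g X X * g X X ≠ 0 := mul_ne_zero hX hX
  have h9 := congrArg (fun z => (g X X * g X X)⁻¹ • z) hfin
  simp only [smul_smul, ← mul_assoc, inv_mul_cancel₀ hcne, one_mul, one_smul] at h9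
  exact h9
end

section
/- Let R be a Jacobi-diagonalizable algebraic curvature tensor on a scalar product space (V, g). Then R is Jacobi-dual if and only if R is weak Jacobi-dual. -/
/- Common definitions: scalar product space (V, g) with nondegenerate symmetric bilinear
form g, algebraic curvature tensors, Jacobi operators, and derived notions. -/

variable {V : Type*} [AddCommGroup V] [Module ℝ V]

/-- Weak Jacobi-duality: duality for mutually orthogonal unit vectors. -/
def WeakJacobiDual (g : V →ₗ[ℝ] V →ₗ[ℝ] ℝ) (J : V → V →ₗ[ℝ] V) : Prop :=
  ∀ (X Y : V) (l : ℝ), (g X X = 1 ∨ g X X = -1) → (g Y Y = 1 ∨ g Y Y = -1) → g X Y = 0 →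
    J X Y = (g X X * l) • Y → J Y X = (g Y Y * l) • X
set_option maxHeartbeats 2000000 in
/-- a Jacobi-diagonalizable algebraic curvature tensor is Jacobi-dual iff it
is weak Jacobi-dual. -/
theorem stmt_9 {V : Type*} [AddCommGroup V] [Module ℝ V] [FiniteDimensional ℝ V]
(g : V →ₗ[ℝ] V →ₗ[ℝ] ℝ) (hgsymm : ∀ x y : V, g x y = g y x)
    (hgnd : ∀ x : V, (∀ y : V, g x y = 0) → x = 0)
    (R : V → V → V → V → ℝ) (hR : IsCurv R)
    (J : V → V →ₗ[ℝ] V) (hJ : IsJacobi g R J)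
    (hdiag : JacobiDiagonalizable g J) :
    JacobiDual g J ↔ WeakJacobiDual g J := by
  obtain ⟨hR1, hR2, hR3, hR4, hA12, hA34, hPair, -⟩ := hR
  have hz2 : ∀ X Z W : V, R X 0 Z W = 0 := by
    intro X Z W
    have h := hR2 1 X 0 0 Z W
    simp at h
    linarith
  have hadd2 : ∀ X A B Z W : V, R X (A + B) Z W = R X A Z W + R X B Z W := by
    intro X A B Z W; have h := hR2 1 X A B Z W; simpa using h
  have hsmul2 : ∀ (a : ℝ) (X A Z W : V), R X (a • A) Z W = a * R X A Z W := by
    intro a X A Z W; have h := hR2 a X A 0 Z W; simpa [hz2] using h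
  have hz3 : ∀ X Y W : V, R X Y 0 W = 0 := by
    intro X Y W
    have h := hR3 1 X Y 0 0 W
    simp at h
    linarith
  have hadd3 : ∀ X Y A B W : V, R X Y (A + B) W = R X Y A W + R X Y B W := by
    intro X Y A B W; have h := hR3 1 X Y A B W; simpa using h
  have hsmul3 : ∀ (a : ℝ) (X Y A W : V), R X Y (a • A) W = a * R X Y A W := by
    intro a X Y A W; have h := hR3 a X Y A 0 W; simpa [hz3] using h
  have hext : ∀ A B : V, (∀ W, g A W = g B W) → A = B := by
    intro A B h
    have h0 : A - B = 0 := hgnd _ (fun y => by simp [map_sub, LinearMap.sub_apply, h y])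
    exact sub_eq_zero.mp h0
  have hRXX : ∀ A Z W : V, R A A Z W = 0 := fun A Z W => by have := hA12 A A Z W; linarith
  have hJsmul : ∀ (c : ℝ) (Z W : V), J (c • Z) W = (c * c) • J Z W := by
    intro c Z W
    refine hext _ _ (fun T => ?_)
    rw [hJ, hsmul2, hsmul3, map_smul, LinearMap.smul_apply, smul_eq_mul, hJ]; ring
  have hJzero : ∀ W : V, J 0 W = 0 := by
    intro W; refine hext _ _ fun T => ?_
    rw [hJ]; simp [hz2]
  have hJXX : ∀ Z : V, J Z Z = 0 := by
    intro Z; refine hext _ _ fun T => ?_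
    rw [hJ]; simp [hRXX]
  have hJorthX : ∀ C A : V, g (J C A) C = 0 := by
    intro C A; rw [hJ]; have := hA34 A C C C; linarith
  have hsa : ∀ C A B : V, g (J C A) B = g (J C B) A := by
    intro C A B; rw [hJ, hJ]
    have h1 := hPair A C C B
    have h2 := hA12 C B A C
    have h3 := hA34 B C C A
    linarith
  have hnorm : ∀ v : V, g v v ≠ 0 →
      ∃ c : ℝ, c ≠ 0 ∧ (c * c * g v v = 1 ∨ c * c * g v v = -1) := by
    intro v hv
    have hs : Real.sqrt |g v v| > 0 := Real.sqrt_pos.mpr (abs_pos.mpr hv)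
    refine ⟨(Real.sqrt |g v v|)⁻¹, inv_ne_zero hs.ne', ?_⟩
    have hss : Real.sqrt |g v v| * Real.sqrt |g v v| = |g v v| := Real.mul_self_sqrt (abs_nonneg _)
    have hcc : (Real.sqrt |g v v|)⁻¹ * (Real.sqrt |g v v|)⁻¹ * |g v v| = 1 := by
      field_simp
      rw [sq]; exact hss.symm
    set s := Real.sqrt |g v v| with hsdef
    rcases lt_or_gt_of_ne hv with h | h
    · right; rw [abs_of_neg h] at hcc; linear_combination -hcc
    · left; rw [abs_of_pos h] at hcc; linear_combination hcc
  constructor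
  · intro h X Y l hXu _ _ heq
    exact h X Y l (by rcases hXu with h' | h' <;> rw [h'] <;> norm_num) heq
  · intro hw
    -- star: the key claim for orthogonal eigenvectors
    have star : ∀ (X Z : V) (l : ℝ), (g X X = 1 ∨ g X X = -1) → g X Z = 0 →
        J X Z = (g X X * l) • Z → J Z X = (g Z Z * l) • X := by
      intro X Z l hXu hXZ heqZ
      have hE2 : g X X * g X X = 1 := by rcases hXu with h | h <;> rw [h] <;> norm_num
      have hXne : g X X ≠ 0 := by rcases hXu with h | h <;> rw [h] <;> norm_num
      by_cases hZ0 : Z = 0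
      · subst hZ0; simp [hJzero]
      by_cases hZZ : g Z Z = 0
      · -- null eigenvector case: use diagonalizability to build a hyperbolic pair
        have hmemE : ∀ v : V, v ∈ Module.End.eigenspace (J X) (g X X * l) ↔
            J X v = (g X X * l) • v := fun v => Module.End.mem_eigenspace_iff
        have hEl : ∀ e : V, J X e = (g X X * l) • e → l * g X e = 0 := by
          intro e he
          have h0 := hJorthX X e
          rw [he, map_smul, LinearMap.smul_apply, smul_eq_mul, hgsymm e X] at h0
          linear_combination g X X * h0 - l * g X e * hE2
        have hexV : ∃ v : V, g Z v ≠ 0 := by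
          by_contra h
          push_neg at h
          exact hZ0 (hgnd Z h)
        obtain ⟨v0, hv0⟩ := hexV
        have htop : (⨆ μ : ℝ, Module.End.eigenspace (J X) μ) = ⊤ := hdiag X hXne
        have hsup : (⨆ μ : ℝ, Module.End.eigenspace (J X) μ) ≤
            Module.End.eigenspace (J X) (g X X * l) ⊔ LinearMap.ker (g Z) := by
          refine iSup_le fun μ => ?_
          by_cases hmu : μ = g X X * l
          · subst hmu; exact le_sup_left
          · intro v hv
            refine Submodule.mem_sup_right ?_
            rw [LinearMap.mem_ker]
            have hv' : J X v = μ • v := Module.End.mem_eigenspace_iff.mp hv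
            have h1 : g Z (J X v) = μ * g Z v := by rw [hv', map_smul, smul_eq_mul]
            have h2 : g Z (J X v) = g X X * l * g Z v := by
              rw [hgsymm Z (J X v), hsa X v Z, heqZ, map_smul, LinearMap.smul_apply,
                smul_eq_mul]
            have h3 : (μ - g X X * l) * g Z v = 0 := by linear_combination h2 - h1
            rcases mul_eq_zero.mp h3 with h | h
            · exact absurd (by linarith) hmu
            · exact h
        have hv0mem := hsup (htop ▸ Submodule.mem_top (x := v0))
        obtain ⟨e, heE, k, hk, hek⟩ := Submodule.mem_sup.mp hv0mem
        have hkz : g Z k = 0 := LinearMap.mem_ker.mp hk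
        have hgZe : g Z e ≠ 0 := by
          have hsum : g Z v0 = g Z e := by rw [← hek, map_add, hkz, add_zero]
          rw [hsum] at hv0; exact hv0
        have heE' : J X e = (g X X * l) • e := (hmemE e).mp heE
        have hle : l * g X e = 0 := hEl e heE'
        have hZX : g Z X = 0 := by rw [hgsymm]; exact hXZ
        -- project e onto the orthogonal complement of X
        obtain ⟨Wv, hWdef⟩ : ∃ w : V, w = e - (g X X * g X e) • X := ⟨_, rfl⟩
        have hWE : J X Wv = (g X X * l) • Wv := by
          refine hext _ _ fun T => ?_
          rw [hWdef]
          simp only [map_sub, map_smul, LinearMap.sub_apply, LinearMap.smul_apply,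
            smul_eq_mul, heE', hJXX, map_zero, LinearMap.zero_apply]
          linear_combination (g X X * g X X * g X T) * hle
        have hXW : g X Wv = 0 := by
          rw [hWdef, map_sub, map_smul, smul_eq_mul]
          linear_combination (- g X e) * hE2
        have hZWv : g Z Wv = g Z e := by
          rw [hWdef, map_sub, map_smul, smul_eq_mul, hZX]
          ring
        have hWZ : g Wv Z = g Z e := by rw [hgsymm]; exact hZWv
        -- make it null while keeping the pairing with Z
        obtain ⟨t, htdef⟩ : ∃ t : ℝ, t = g Wv Wv / (2 * g Z e) := ⟨_, rfl⟩
        obtain ⟨W1, hW1def⟩ : ∃ w : V, w = Wv - t • Z := ⟨_, rfl⟩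
        have hW1E : J X W1 = (g X X * l) • W1 := by
          refine hext _ _ fun T => ?_
          rw [hW1def]
          simp only [map_sub, map_smul, LinearMap.sub_apply, LinearMap.smul_apply,
            smul_eq_mul, hWE, heqZ]
          ring
        have hXW1 : g X W1 = 0 := by
          rw [hW1def, map_sub, map_smul, smul_eq_mul, hXW, hXZ]
          ring
        have hZW1 : g Z W1 = g Z e := by
          rw [hW1def, map_sub, map_smul, smul_eq_mul, hZWv, hZZ]
          ring
        have hW1Z : g W1 Z = g Z e := by rw [hgsymm]; exact hZW1
        have hW1W1 : g W1 W1 = 0 := by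
          rw [hW1def]
          simp only [map_sub, map_smul, LinearMap.sub_apply, LinearMap.smul_apply,
            smul_eq_mul, hWZ, hZWv, hZZ]
          rw [htdef]
          field_simp
          ring
        -- normalize the sign of the pairing
        obtain ⟨σ, hsig⟩ : ∃ σ : ℝ, σ = if 0 < g Z e then 1 else -1 := ⟨_, rfl⟩
        have hsigb : σ * g Z e = |g Z e| := by
          rw [hsig]; split_ifs with h
          · rw [abs_of_pos h]; ring
          · rw [abs_of_nonpos (le_of_not_gt h)]; ring
        have habs : |g Z e| > 0 := abs_pos.mpr hgZe
        obtain ⟨W2, hW2def⟩ : ∃ w : V, w = σ • W1 := ⟨_, rfl⟩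
        have hW2E : J X W2 = (g X X * l) • W2 := by
          refine hext _ _ fun T => ?_
          rw [hW2def]
          simp only [map_smul, LinearMap.smul_apply, smul_eq_mul, hW1E]
          ring
        have hXW2 : g X W2 = 0 := by
          rw [hW2def, map_smul, smul_eq_mul, hXW1]; ring
        have hZW2 : g Z W2 = |g Z e| := by
          rw [hW2def, map_smul, smul_eq_mul, hZW1, hsigb]
        have hW2Z : g W2 Z = |g Z e| := by rw [hgsymm]; exact hZW2
        have hW2W2 : g W2 W2 = 0 := by
          rw [hW2def]
          simp only [map_smul, LinearMap.smul_apply, smul_eq_mul, hW1W1]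
          ring
        -- the hyperbolic pair P, Q
        obtain ⟨s, hsdef⟩ : ∃ s : ℝ, s = Real.sqrt (2 * |g Z e|) := ⟨_, rfl⟩
        have hs2 : s * s = 2 * |g Z e| := by
          rw [hsdef]; exact Real.mul_self_sqrt (by positivity)
        have hsne : s ≠ 0 := by
          rw [hsdef]
          exact (Real.sqrt_pos.mpr (by positivity)).ne'
        obtain ⟨P, hPdef⟩ : ∃ p : V, p = s⁻¹ • (Z + W2) := ⟨_, rfl⟩
        obtain ⟨Q, hQdef⟩ : ∃ q : V, q = s⁻¹ • (Z - W2) := ⟨_, rfl⟩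
        have hPP : g P P = 1 := by
          rw [hPdef]
          simp only [map_add, map_smul, map_sub, LinearMap.add_apply, LinearMap.sub_apply,
            LinearMap.smul_apply, smul_eq_mul, hZZ, hZW2, hW2Z, hW2W2]
          have h : s⁻¹ * s⁻¹ * (2 * |g Z e|) = 1 := by rw [← hs2]; field_simp
          linear_combination h
        have hQQ : g Q Q = -1 := by
          rw [hQdef]
          simp only [map_add, map_smul, map_sub, LinearMap.add_apply, LinearMap.sub_apply,
            LinearMap.smul_apply, smul_eq_mul, hZZ, hZW2, hW2Z, hW2W2]
          have h : s⁻¹ * s⁻¹ * (2 * |g Z e|) = 1 := by rw [← hs2]; field_simp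
          linear_combination -h
        have hXP : g X P = 0 := by
          rw [hPdef]
          simp only [map_add, map_smul, LinearMap.add_apply, LinearMap.smul_apply,
            smul_eq_mul, hXZ, hXW2]
          ring
        have hXQ : g X Q = 0 := by
          rw [hQdef]
          simp only [map_sub, map_smul, LinearMap.sub_apply, LinearMap.smul_apply,
            smul_eq_mul, hXZ, hXW2]
          ring
        have hPE : J X P = (g X X * l) • P := by
          refine hext _ _ fun T => ?_
          rw [hPdef]
          simp only [map_add, map_smul, LinearMap.add_apply, LinearMap.smul_apply,
            smul_eq_mul, heqZ, hW2E]
          ring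
        have hQE : J X Q = (g X X * l) • Q := by
          refine hext _ _ fun T => ?_
          rw [hQdef]
          simp only [map_sub, map_smul, LinearMap.sub_apply, LinearMap.smul_apply,
            smul_eq_mul, heqZ, hW2E]
          ring
        have hZPQ : Z = (s / 2) • (P + Q) := by
          refine hext _ _ fun T => ?_
          rw [hPdef, hQdef]
          simp only [map_add, map_sub, map_smul, LinearMap.add_apply, LinearMap.sub_apply,
            LinearMap.smul_apply, smul_eq_mul]
          field_simp
          ring
        -- weak duality applied to P, Q, and 2P + Q
        have hd1 := hw X P l hXu (Or.inl hPP) hXP hPE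
        rw [hPP, one_mul] at hd1
        have hd2 := hw X Q l hXu (Or.inr hQQ) hXQ hQE
        rw [hQQ, neg_one_mul] at hd2
        have hPQ : g P Q = 0 := by
          rw [hPdef, hQdef]
          simp only [map_add, map_sub, map_smul, LinearMap.add_apply, LinearMap.sub_apply,
            LinearMap.smul_apply, smul_eq_mul, hZZ, hZW2, hW2Z, hW2W2]
          ring
        have hQP : g Q P = 0 := by rw [hgsymm]; exact hPQ
        obtain ⟨T3, hT3def⟩ : ∃ x : ℝ, x = Real.sqrt 3 := ⟨_, rfl⟩
        have hT32 : T3 * T3 = 3 := by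
          rw [hT3def]; exact Real.mul_self_sqrt (by norm_num)
        have hT3ne : T3 ≠ 0 := by
          rw [hT3def]
          exact (Real.sqrt_pos.mpr (by norm_num)).ne'
        obtain ⟨u, hudef⟩ : ∃ u : V, u = T3⁻¹ • ((2:ℝ) • P + Q) := ⟨_, rfl⟩
        have huu : g u u = 1 := by
          rw [hudef]
          simp only [map_add, map_smul, LinearMap.add_apply, LinearMap.smul_apply,
            smul_eq_mul, hPP, hQQ, hPQ, hQP]
          have h : T3⁻¹ * T3⁻¹ * 3 = 1 := by rw [← hT32]; field_simp
          linear_combination h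
        have hXu3 : g X u = 0 := by
          rw [hudef]
          simp only [map_add, map_smul, LinearMap.add_apply, LinearMap.smul_apply,
            smul_eq_mul, hXP, hXQ]
          ring
        have hUE : J X u = (g X X * l) • u := by
          refine hext _ _ fun T => ?_
          rw [hudef]
          simp only [map_add, map_smul, LinearMap.add_apply, LinearMap.smul_apply,
            smul_eq_mul, hPE, hQE]
          ring
        have hd3 := hw X u l hXu (Or.inl huu) hXu3 hUE
        rw [huu, one_mul] at hd3
        have h2PQ : (2:ℝ) • P + Q = T3 • u := by
          rw [hudef, smul_smul, mul_inv_cancel₀ hT3ne, one_smul]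
        have hd3' : J ((2:ℝ) • P + Q) X = (3 * l) • X := by
          rw [h2PQ, hJsmul, hd3, smul_smul, hT32]
        -- extract the mixed curvature term
        have hRPP : ∀ T : V, R X P P T = l * g X T := by
          intro T
          have h := hJ P X T
          rw [hd1, map_smul, LinearMap.smul_apply, smul_eq_mul] at h
          linarith
        have hRQQ : ∀ T : V, R X Q Q T = - (l * g X T) := by
          intro T
          have h := hJ Q X T
          rw [hd2, map_smul, LinearMap.smul_apply, smul_eq_mul] at h
          linarith
        have hmix : ∀ T : V, R X P Q T + R X Q P T = 0 := by
          intro T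
          have h := hJ ((2:ℝ) • P + Q) X T
          rw [hd3'] at h
          simp only [hadd2, hadd3, hsmul2, hsmul3, map_smul, LinearMap.smul_apply,
            smul_eq_mul] at h
          have h2 := hRPP T
          have h3 := hRQQ T
          linarith
        have hJPQ0 : J (P + Q) X = 0 := by
          refine hext _ _ fun T => ?_
          rw [hJ]
          simp only [hadd2, hadd3, map_zero, LinearMap.zero_apply]
          have h2 := hRPP T
          have h3 := hRQQ T
          have h4 := hmix T
          linarith
        have hfin : J Z X = 0 := by
          conv_lhs => rw [hZPQ]
          rw [hJsmul, hJPQ0, smul_zero]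
        rw [hfin, hZZ, zero_mul, zero_smul]
      · -- nonnull case: rescale Z to a unit vector and use weak duality
        obtain ⟨c, hc, hcu⟩ := hnorm Z hZZ
        have huu : g (c • Z) (c • Z) = c * c * g Z Z := by
          simp only [map_smul, LinearMap.smul_apply, smul_eq_mul]; ring
        have hXu' : g X (c • Z) = 0 := by simp [map_smul, hXZ]
        have hUE : J X (c • Z) = (g X X * l) • (c • Z) := by
          rw [map_smul, heqZ, smul_comm]
        have hd := hw X (c • Z) l hXu (by rw [huu]; exact hcu) hXu' hUE
        have hJu : J (c • Z) X = (c * c) • J Z X := hJsmul c Z X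
        refine smul_right_injective V (mul_ne_zero hc hc) ?_
        show (c * c) • J Z X = (c * c) • ((g Z Z * l) • X)
        rw [← hJu, hd, huu, smul_smul]
        congr 1
        ring
    -- core: the claim for a unit X and arbitrary Y
    have core : ∀ (X Y : V) (l : ℝ), (g X X = 1 ∨ g X X = -1) →
        J X Y = (g X X * l) • Y → J Y X = (g Y Y * l) • X := by
      intro X Y l hXu heq
      have hE2 : g X X * g X X = 1 := by rcases hXu with h | h <;> rw [h] <;> norm_num
      set a := g X X * g X Y with hadef
      set Z := Y - a • X with hZdef
      have hXZ : g X Z = 0 := by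
        rw [hZdef, map_sub, map_smul, smul_eq_mul]
        linear_combination (- g X X) * hadef + (- g X Y) * hE2
      have hZX : g Z X = 0 := by rw [hgsymm]; exact hXZ
      have hYZ : Y = Z + a • X := by rw [hZdef, sub_add_cancel]
      have heqZa : J X Z = (g X X * l) • Z + (g X X * l * a) • X := by
        rw [hZdef, map_sub, map_smul, heq, hJXX, smul_zero, sub_zero]
        conv_lhs => rw [hYZ]
        rw [smul_add, smul_smul]
      have hla : l * a = 0 := by
        have h0 := hJorthX X Z
        rw [heqZa, map_add, LinearMap.add_apply, map_smul, map_smul,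
          LinearMap.smul_apply, LinearMap.smul_apply, smul_eq_mul, smul_eq_mul, hZX] at h0
        linear_combination h0 - (l * a) * hE2
      have heqZ2 : J X Z = (g X X * l) • Z := by
        rw [heqZa]
        have hz : g X X * l * a = 0 := by linear_combination (g X X) * hla
        rw [hz, zero_smul, add_zero]
      have hstar := star X Z l hXu hXZ heqZ2
      have hYY : g Y Y = g Z Z + a * a * g X X := by
        rw [hYZ]
        simp only [map_add, map_smul, LinearMap.add_apply, LinearMap.smul_apply,
          smul_eq_mul, hXZ, hZX]
        ring
      refine hext _ _ fun W => ?_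
      rw [hJ]
      conv_lhs => rw [hYZ]
      simp only [hadd2, hadd3, hsmul2, hsmul3]
      have h1 : R X Z X W = - (g X X * l * g Z W) := by
        have h2 := hJ X Z W
        rw [heqZ2, map_smul, LinearMap.smul_apply, smul_eq_mul] at h2
        have h3 := hA12 X Z X W
        linarith
      have h2 : R X Z Z W = g Z Z * l * g X W := by
        have h3 := hJ Z X W
        rw [hstar, map_smul, LinearMap.smul_apply, smul_eq_mul] at h3
        linarith
      simp only [h1, h2, hRXX, map_smul, LinearMap.smul_apply, smul_eq_mul, hYY,
        mul_zero, add_zero, zero_add]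
      linear_combination (-(g X X * g Z W) - a * g X X * g X W) * hla
    intro X Y l hX heq
    obtain ⟨c, hc, hcu⟩ := hnorm X hX
    have hX'u : g (c • X) (c • X) = c * c * g X X := by simp [map_smul, smul_eq_mul]; ring
    have heq' : J (c • X) Y = (g (c • X) (c • X) * l) • Y := by
      rw [hJsmul, heq, hX'u, smul_smul]
      congr 1
      ring
    have hres := core (c • X) Y l (by rw [hX'u]; exact hcu) heq'
    rw [map_smul] at hres
    refine smul_right_injective V hc ?_
    show c • J Y X = c • ((g Y Y * l) • X)
    rw [hres, smul_smul, smul_smul]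
    congr 1
    ring
end

section
/- Let R be a Jacobi-orthogonal algebraic curvature tensor on a 3-dimensional scalar product space (V, g), and let (A, B, C) be a basis of V consisting of pairwise orthogonal nonnull vectors. Then R(B, A, A, C) · R(A, B, B, C) = 0. -/
/- Common definitions: scalar product space (V, g) with nondegenerate symmetric bilinear
form g, algebraic curvature tensors, Jacobi operators, and derived notions. -/

variable {V : Type*} [AddCommGroup V] [Module ℝ V]

lemma span_triple' {A B C : V}
    (h : Submodule.span ℝ ({A, B, C} : Set V) = ⊤) (v : V) :
    ∃ a b c : ℝ, v = a • A + b • B + c • C := by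
  have hv : v ∈ Submodule.span ℝ ({A, B, C} : Set V) := h ▸ Submodule.mem_top
  rw [Submodule.mem_span_insert] at hv
  obtain ⟨a, z, hz, rfl⟩ := hv
  rw [Submodule.mem_span_insert] at hz
  obtain ⟨b, w, hw, rfl⟩ := hz
  rw [Submodule.mem_span_singleton] at hw
  obtain ⟨c, rfl⟩ := hw
  exact ⟨a, b, c, by rw [add_assoc]⟩

lemma sign_lemma (r : ℝ) (hr : r ≠ 0) :
    (Real.sqrt |r|)⁻¹ ≠ 0 ∧
    ((Real.sqrt |r|)⁻¹ * ((Real.sqrt |r|)⁻¹ * r) = 1 ∨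
      (Real.sqrt |r|)⁻¹ * ((Real.sqrt |r|)⁻¹ * r) = -1) := by
  have h0 : Real.sqrt |r| > 0 := Real.sqrt_pos.2 (abs_pos.2 hr)
  have hs : Real.sqrt |r| * Real.sqrt |r| = |r| := Real.mul_self_sqrt (abs_nonneg r)
  have hne : Real.sqrt |r| ≠ 0 := ne_of_gt h0
  refine ⟨inv_ne_zero hne, ?_⟩
  have key : (Real.sqrt |r|)⁻¹ * ((Real.sqrt |r|)⁻¹ * r) = |r|⁻¹ * r := by
    rw [← mul_assoc, ← mul_inv, hs]
  rw [key]
  rcases hr.lt_or_gt with h | h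
  · right; rw [abs_of_neg h]; field_simp
  · left; rw [abs_of_pos h]; field_simp

/-- for a Jacobi-orthogonal R on a 3-dimensional scalar product space and a
basis (A, B, C) of pairwise orthogonal nonnull vectors, R(B,A,A,C)·R(A,B,B,C) = 0. -/
theorem stmt_11 {V : Type*} [AddCommGroup V] [Module ℝ V] [FiniteDimensional ℝ V]
    (hdim : Module.finrank ℝ V = 3)
(g : V →ₗ[ℝ] V →ₗ[ℝ] ℝ) (hgsymm : ∀ x y : V, g x y = g y x)
    (hgnd : ∀ x : V, (∀ y : V, g x y = 0) → x = 0)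
    (R : V → V → V → V → ℝ) (hR : IsCurv R)
    (J : V → V →ₗ[ℝ] V) (hJ : IsJacobi g R J)
    (horth : JacobiOrthogonal g J)
    (A B C : V)
    (hbasis : LinearIndependent ℝ ![A, B, C] ∧
      Submodule.span ℝ ({A, B, C} : Set V) = ⊤)
    (hAB : g A B = 0) (hAC : g A C = 0) (hBC : g B C = 0)
    (hA : g A A ≠ 0) (hB : g B B ≠ 0) (hC : g C C ≠ 0) :
    R B A A C * R A B B C = 0 := by
  obtain ⟨h1, h2, h3, h4, hxy, hzw, hsym, hbi⟩ := hR
  -- R is zero when first argument is 0, and homogeneous in slots 1,2,3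
  have hz0 : ∀ Y Z W : V, R 0 Y Z W = 0 := by
    intro Y Z W
    have := h1 1 (0 : V) 0 Y Z W
    simp at this
    linarith
  have hs1 : ∀ (a : ℝ) (X Y Z W : V), R (a • X) Y Z W = a * R X Y Z W := by
    intro a X Y Z W
    have := h1 a X 0 Y Z W
    simpa [hz0] using this
  have hz0' : ∀ X Z W : V, R X 0 Z W = 0 := by
    intro X Z W
    have := hxy X 0 Z W
    rw [this, hz0]; ring
  have hs2 : ∀ (a : ℝ) (X Y Z W : V), R X (a • Y) Z W = a * R X Y Z W := by
    intro a X Y Z W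
    have := h2 a X Y 0 Z W
    simpa [hz0'] using this
  have hz0'' : ∀ X Y W : V, R X Y 0 W = 0 := by
    intro X Y W
    have := hsym X Y 0 W
    rw [this, hz0]
  have hs3 : ∀ (a : ℝ) (X Y Z W : V), R X Y (a • Z) W = a * R X Y Z W := by
    intro a X Y Z W
    have := h3 a X Y Z 0 W
    simpa [hz0''] using this
  -- last two slots equal gives 0
  have hww : ∀ X Y W : V, R X Y W W = 0 := by
    intro X Y W
    have := hzw X Y W W
    linarith
  have hJ' : ∀ X Y Z : V, g (J X Y) Z = R Y X X Z := hJ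
  -- J of scaled vectors
  have hJs : ∀ (s t : ℝ) (X Y : V), J (s • X) (t • Y) = (s * s * t) • J X Y := by
    intro s t X Y
    have h0 : J (s • X) (t • Y) - (s * s * t) • J X Y = 0 := by
      apply hgnd
      intro Z
      simp only [map_sub, LinearMap.sub_apply, map_smul, LinearMap.smul_apply,
        smul_eq_mul, hJ', hs2, hs3]
      ring
    have := sub_eq_zero.mp h0
    exact this
  -- key orthogonality: g (J A B) (J B A) = 0
  obtain ⟨hsA, hA1⟩ := sign_lemma (g A A) hA
  obtain ⟨hsB, hB1⟩ := sign_lemma (g B B) hB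
  set s : ℝ := (Real.sqrt |g A A|)⁻¹ with hs_def
  set t : ℝ := (Real.sqrt |g B B|)⁻¹ with ht_def
  have hXX : g (s • A) (s • A) = 1 ∨ g (s • A) (s • A) = -1 := by
    simp only [map_smul, LinearMap.smul_apply, smul_eq_mul]
    exact hA1
  have hYY : g (t • B) (t • B) = 1 ∨ g (t • B) (t • B) = -1 := by
    simp only [map_smul, LinearMap.smul_apply, smul_eq_mul]
    exact hB1
  have hXY : g (s • A) (t • B) = 0 := by
    simp only [map_smul, LinearMap.smul_apply, smul_eq_mul]
    rw [hAB]; ring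
  have horth0 := horth (s • A) (t • B) hXX hYY hXY
  rw [hJs s t A B, hJs t s B A] at horth0
  simp only [map_smul, LinearMap.smul_apply, smul_eq_mul] at horth0
  have hkey : g (J A B) (J B A) = 0 := by
    have hst : (s * s * t) * ((t * t * s) * g (J A B) (J B A)) = 0 := by
      linear_combination horth0
    have hst' : ((s * s * t) * (t * t * s)) * g (J A B) (J B A) = 0 := by
      linear_combination hst
    have hne : (s * s * t) * (t * t * s) ≠ 0 :=
      mul_ne_zero (mul_ne_zero (mul_ne_zero hsA hsA) hsB)
        (mul_ne_zero (mul_ne_zero hsB hsB) hsA)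
    exact (mul_eq_zero.mp hst').resolve_left hne
  -- decompose J B A in the basis
  obtain ⟨a, b, c, hdec⟩ := span_triple' hbasis.2 (J B A)
  -- g (J B A) B = b * g B B, but also = R A B B B = 0
  have hgJBA : ∀ Z : V, g (J B A) Z = a * g A Z + b * g B Z + c * g C Z := by
    intro Z
    rw [hdec]
    simp [map_add, map_smul]
  have hb0 : b = 0 := by
    have h1' := hgJBA B
    rw [hJ'] at h1'
    rw [hww, hAB, hgsymm C B, hBC] at h1'
    have : b * g B B = 0 := by linarith
    exact (mul_eq_zero.mp this).resolve_right hB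
  have hc : c * g C C = R A B B C := by
    have h1' := hgJBA C
    rw [hJ'] at h1'
    rw [hAC, hBC] at h1'
    linarith
  -- compute g (J A B) (J B A)
  have hmain : g (J A B) (J B A) = c * R B A A C := by
    rw [hdec, map_add, map_add, map_smul, map_smul, map_smul, hJ', hJ', hJ',
      smul_eq_mul, smul_eq_mul, smul_eq_mul, hww, hb0]
    ring
  -- conclude
  have hc0 : c * R B A A C = 0 := by rw [← hmain, hkey]
  have : (c * g C C) * R B A A C = 0 := by
    have : c * R B A A C * g C C = 0 := by rw [hc0]; ring
    linarith [this]
  rw [hc] at this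
  linarith [this]
end

section
/- Let R be a Jacobi-orthogonal algebraic curvature tensor on a 3-dimensional scalar product space (V, g), and let (A, B, C) be a basis of V consisting of pairwise orthogonal nonnull vectors. Then (ε_C · R(B, A, A, B) − ε_B · R(C, A, A, C)) · R(A, B, B, C) = 0. -/
/- Common definitions: scalar product space (V, g) with nondegenerate symmetric bilinear
form g, algebraic curvature tensors, Jacobi operators, and derived notions. -/

variable {V : Type*} [AddCommGroup V] [Module ℝ V]

set_option maxHeartbeats 1000000 in
/-- for a Jacobi-orthogonal R on a 3-dimensional scalar product space and a
basis (A, B, C) of pairwise orthogonal nonnull vectors,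
(ε_C·R(B,A,A,B) − ε_B·R(C,A,A,C))·R(A,B,B,C) = 0. -/
theorem stmt_12 {V : Type*} [AddCommGroup V] [Module ℝ V] [FiniteDimensional ℝ V]
    (hdim : Module.finrank ℝ V = 3)
(g : V →ₗ[ℝ] V →ₗ[ℝ] ℝ) (hgsymm : ∀ x y : V, g x y = g y x)
    (hgnd : ∀ x : V, (∀ y : V, g x y = 0) → x = 0)
    (R : V → V → V → V → ℝ) (hR : IsCurv R)
    (J : V → V →ₗ[ℝ] V) (hJ : IsJacobi g R J)
    (horth : JacobiOrthogonal g J)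
    (A B C : V)
    (hbasis : LinearIndependent ℝ ![A, B, C] ∧
      Submodule.span ℝ ({A, B, C} : Set V) = ⊤)
    (hAB : g A B = 0) (hAC : g A C = 0) (hBC : g B C = 0)
    (hA : g A A ≠ 0) (hB : g B B ≠ 0) (hC : g C C ≠ 0) :
    (g C C * R B A A B - g B B * R C A A C) * R A B B C = 0 := by
  obtain ⟨hR1, hR2, hR3, hR4, hR5, hR6, hR7, hR8⟩ := hR
  -- basic symmetry consequences
  have Rz4 : ∀ X Y Z : V, R X Y Z Z = 0 := by
    intro X Y Z; have := hR6 X Y Z Z; linarith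
  have hCB : g C B = 0 := by rw [hgsymm]; exact hBC
  have hBA : g B A = 0 := by rw [hgsymm]; exact hAB
  have hCA : g C A = 0 := by rw [hgsymm]; exact hAC
  -- q is symmetric: R C A A B = R B A A C
  have hq : R C A A B = R B A A C := by
    have hb := hR8 A C B A
    have h1 : R C B A A = 0 := Rz4 _ _ _
    have h2 : R A C B A = R B A A C := hR7 A C B A
    have h3 : R B A C A = - R A B C A := by have := hR5 B A C A; linarith
    have h4 : R A B C A = R C A A B := hR7 A B C A
    linarith
  have hm : R A B C B = - R A B B C := by
    have hb := hR8 A B C B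
    have h1 : R C A B B = 0 := Rz4 _ _ _
    have h2 : R B C A B = R A B B C := hR7 B C A B
    linarith
  have hn : R A C B C = - R A C C B := by
    have hb := hR8 A C B C
    have h1 : R B A C C = 0 := Rz4 _ _ _
    have h2 : R C B A C = R A C C B := hR7 C B A C
    linarith
  -- multilinearity consequences
  have R0₁ : ∀ Y Z W : V, R 0 Y Z W = 0 := by
    intro Y Z W; have := hR1 1 0 0 Y Z W; simp at this; linarith
  have R0₂ : ∀ X Z W : V, R X 0 Z W = 0 := by
    intro X Z W; have := hR2 1 X 0 0 Z W; simp at this; linarith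
  have R0₃ : ∀ X Y W : V, R X Y 0 W = 0 := by
    intro X Y W; have := hR3 1 X Y 0 0 W; simp at this; linarith
  have Rs₁ : ∀ (t : ℝ) (X Y Z W : V), R (t • X) Y Z W = t * R X Y Z W := by
    intro t X Y Z W; have := hR1 t X 0 Y Z W; simpa [R0₁] using this
  have Rs₂ : ∀ (t : ℝ) (X Y Z W : V), R X (t • Y) Z W = t * R X Y Z W := by
    intro t X Y Z W; have := hR2 t X Y 0 Z W; simpa [R0₂] using this
  have Rs₃ : ∀ (t : ℝ) (X Y Z W : V), R X Y (t • Z) W = t * R X Y Z W := by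
    intro t X Y Z W; have := hR3 t X Y Z 0 W; simpa [R0₃] using this
  -- orthogonal expansion of g
  have hrepr : ∀ v : V, v = (g A v / g A A) • A + (g B v / g B B) • B + (g C v / g C C) • C := by
    intro v
    set w := v - ((g A v / g A A) • A + (g B v / g B B) • B + (g C v / g C C) • C) with hw
    have hwA : g A w = 0 := by
      simp only [hw, map_sub, map_add, map_smul, smul_eq_mul, hAB, hAC]
      field_simp
      ring
    have hwB : g B w = 0 := by
      simp only [hw, map_sub, map_add, map_smul, smul_eq_mul, hBA, hBC]
      field_simp
      ring
    have hwC : g C w = 0 := by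
      simp only [hw, map_sub, map_add, map_smul, smul_eq_mul, hCA, hCB]
      field_simp
      ring
    have hally : ∀ y : V, g y w = 0 := by
      intro y
      have hy : y ∈ Submodule.span ℝ ({A, B, C} : Set V) := by
        rw [hbasis.2]; trivial
      induction hy using Submodule.span_induction with
      | mem z hz =>
        rcases hz with h | h | h
        · rw [h]; exact hwA
        · rw [h]; exact hwB
        · rw [h]; exact hwC
      | zero => simp
      | add y z _ _ hy hz => simp [map_add, hy, hz]
      | smul t y _ hy => simp [map_smul, hy]
    have hw0 : w = 0 := hgnd w (fun y => by rw [hgsymm]; exact hally y)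
    exact (sub_eq_zero.mp hw0)
  have expand : ∀ u v : V,
      g u v = g u A * g A v / g A A + g u B * g B v / g B B + g u C * g C v / g C C := by
    intro u v
    conv_lhs => rw [hrepr v]
    simp only [map_add, map_smul, LinearMap.add_apply, LinearMap.smul_apply, smul_eq_mul]
    ring
  -- zero components
  have z1 : R B A A A = 0 := Rz4 _ _ _
  have z2 : R C A A A = 0 := Rz4 _ _ _
  have z3 : R A B B B = 0 := Rz4 _ _ _
  have z4 : R A C B B = 0 := Rz4 _ _ _
  have z5 : R A B C C = 0 := Rz4 _ _ _
  have z6 : R A C C C = 0 := Rz4 _ _ _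
  -- the key polynomial identity from Jacobi-orthogonality
  have key : ∀ s : ℝ, s ^ 2 * g B B + g C C ≠ 0 →
      (s * R B A A B + R B A A C) * (R A C C B - s * R A B B C) * (g A A * g C C)
      + (s * R B A A C + R C A A C) * (s ^ 2 * R A B B C - s * R A C C B)
        * (g A A * g B B) = 0 := by
    intro s hs
    have haabs : (0:ℝ) < |g A A| := abs_pos.mpr hA
    have hsabs : (0:ℝ) < |s ^ 2 * g B B + g C C| := abs_pos.mpr hs
    set α := Real.sqrt |g A A| with hαdef
    set ν := Real.sqrt |s ^ 2 * g B B + g C C| with hνdef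
    have hα2 : α ^ 2 = |g A A| := Real.sq_sqrt (abs_nonneg _)
    have hν2 : ν ^ 2 = |s ^ 2 * g B B + g C C| := Real.sq_sqrt (abs_nonneg _)
    have hα0 : α ≠ 0 := (Real.sqrt_pos.mpr haabs).ne'
    have hν0 : ν ≠ 0 := (Real.sqrt_pos.mpr hsabs).ne'
    have hYs : g (s • B + C) (s • B + C) = s ^ 2 * g B B + g C C := by
      simp only [map_add, map_smul, LinearMap.add_apply, LinearMap.smul_apply, smul_eq_mul, hBC, hCB]
      ring
    have hXX : g (α⁻¹ • A) (α⁻¹ • A) = 1 ∨ g (α⁻¹ • A) (α⁻¹ • A) = -1 := by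
      have hval : g (α⁻¹ • A) (α⁻¹ • A) = g A A / |g A A| := by
        simp only [map_smul, LinearMap.smul_apply, smul_eq_mul, ← hα2]
        ring
      rcases hA.lt_or_gt with h | h
      · right; rw [hval, abs_of_neg h, div_neg, div_self hA]
      · left; rw [hval, abs_of_pos h, div_self hA]
    have hYY : g (ν⁻¹ • (s • B + C)) (ν⁻¹ • (s • B + C)) = 1 ∨
        g (ν⁻¹ • (s • B + C)) (ν⁻¹ • (s • B + C)) = -1 := by
      have hval : g (ν⁻¹ • (s • B + C)) (ν⁻¹ • (s • B + C))
          = (s ^ 2 * g B B + g C C) / |s ^ 2 * g B B + g C C| := by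
        simp only [map_smul, LinearMap.smul_apply, smul_eq_mul, hYs, ← hν2]
        ring
      rcases hs.lt_or_gt with h | h
      · right; rw [hval, abs_of_neg h, div_neg, div_self hs]
      · left; rw [hval, abs_of_pos h, div_self hs]
    have hXY : g (α⁻¹ • A) (ν⁻¹ • (s • B + C)) = 0 := by
      simp [map_smul, map_add, LinearMap.add_apply, LinearMap.smul_apply, smul_eq_mul, hAB, hAC]
    have h0 := horth (α⁻¹ • A) (ν⁻¹ • (s • B + C)) hXX hYY hXY
    rw [expand] at h0
    rw [hJ (α⁻¹ • A) (ν⁻¹ • (s • B + C)) A, hJ (α⁻¹ • A) (ν⁻¹ • (s • B + C)) B,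
        hJ (α⁻¹ • A) (ν⁻¹ • (s • B + C)) C,
        hgsymm A (J (ν⁻¹ • (s • B + C)) (α⁻¹ • A)),
        hgsymm B (J (ν⁻¹ • (s • B + C)) (α⁻¹ • A)),
        hgsymm C (J (ν⁻¹ • (s • B + C)) (α⁻¹ • A)),
        hJ (ν⁻¹ • (s • B + C)) (α⁻¹ • A) A, hJ (ν⁻¹ • (s • B + C)) (α⁻¹ • A) B,
        hJ (ν⁻¹ • (s • B + C)) (α⁻¹ • A) C] at h0
    simp only [Rs₁, Rs₂, Rs₃] at h0
    have e1 : ∀ Z : V, R (s • B + C) A A Z = s * R B A A Z + R C A A Z :=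
      fun Z => hR1 s B C A A Z
    have e2 : ∀ Z : V, R A (s • B + C) (s • B + C) Z
        = s * (s * R A B B Z + R A B C Z) + (s * R A C B Z + R A C C Z) := by
      intro Z
      rw [hR2 s A B C (s • B + C) Z, hR3 s A B B C Z, hR3 s A C B C Z]
    simp only [e1, e2, z1, z2, z3, z4, z5, z6, hq, hm, hn, Rz4, mul_zero, zero_mul,
      add_zero, zero_add] at h0
    field_simp at h0
    have hk : ν * (α * α) * (α * (ν * ν)) ≠ 0 :=
      mul_ne_zero (mul_ne_zero hν0 (mul_ne_zero hα0 hα0))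
        (mul_ne_zero hα0 (mul_ne_zero hν0 hν0))
    have h0' : (ν * (α * α) * (α * (ν * ν))) *
        ((s * R B A A B + R B A A C) * (-(s * R A B B C) + R A C C B) * g C C
        + (s * R B A A C + R C A A C) * (s * (s * R A B B C) + -(s * R A C C B)) * g B B)
        = 0 := by
      have h1 : g A A * ((s * R B A A B + R B A A C) * (-(s * R A B B C) + R A C C B) * g C C
        + (s * R B A A C + R C A A C) * (s * (s * R A B B C) + -(s * R A C C B)) * g B B) = 0 := by linear_combination h0
      rw [(mul_eq_zero.mp h1).resolve_left hA, mul_zero]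
    have hE := (mul_eq_zero.mp h0').resolve_left hk
    linear_combination g A A * hE
  have hQ : ∀ s : ℝ,
      ((s * R B A A B + R B A A C) * (R A C C B - s * R A B B C) * (g A A * g C C)
      + (s * R B A A C + R C A A C) * (s ^ 2 * R A B B C - s * R A C C B)
        * (g A A * g B B)) * (s ^ 2 * g B B + g C C) = 0 := by
    intro s
    by_cases h : s ^ 2 * g B B + g C C = 0
    · rw [h, mul_zero]
    · rw [key s h, zero_mul]
  have hqy : R B A A C * R A C C B = 0 := by
    have h : g A A * g C C ^ 2 * (R B A A C * R A C C B) = 0 := by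
      linear_combination hQ 0
    exact (mul_eq_zero.mp h).resolve_left (mul_ne_zero hA (pow_ne_zero 2 hC))
  have hfin : g A A * g B B * ((g C C * R B A A B - g B B * R C A A C) * R A B B C) = 0 := by
    linear_combination (-(1:ℝ)/24) * hQ 2 + (-(1:ℝ)/24) * hQ (-2) + ((1:ℝ)/6) * hQ 1
      + ((1:ℝ)/6) * hQ (-1) + (-(1:ℝ)/4) * hQ 0 - g A A * g B B ^ 2 * hqy
  exact (mul_eq_zero.mp hfin).resolve_left (mul_ne_zero hA hB)
end
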